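/- arXiv:1409.6988 — 6 statements merged into one kernel-verified Lean document; each statement's English description precedes it below -/
import Mathlib

section
/- Let T > 0, A ≥ 0 and α ∈ (0,1]. Let F : [0,T] → ℝ be twice continuously differentiable with F ≥ 0, F(0) = F′(0) = 0, F′(t) ≥ 0 for all t ∈ [0,T], and F″(t) ≤ A · F(t)^{1−α} for all t ∈ [0,T]. Then F(t) ≤ ( (α/2) · √(2A) · t )^{2/α} for all t ∈ [0,T]. -/
open MeasureTheory

/-- Second-order Gronwall estimate: if `F : [0,T] → ℝ` is twice continuously
differentiable with `F ≥ 0`, `F(0) = F'(0) = 0`, `F' ≥ 0` and `F'' ≤ A F^{1-α}` on `[0,T]`,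
then `F(t) ≤ ((α/2) √(2A) t)^{2/α}` on `[0,T]`. -/
theorem stmt5 (T A α : ℝ) (hT : 0 < T) (hA : 0 ≤ A) (hα : 0 < α) (hα1 : α ≤ 1)
    (F F' F'' : ℝ → ℝ)
    (hder : ∀ t ∈ Set.Icc 0 T, HasDerivWithinAt F (F' t) (Set.Icc 0 T) t)
    (hder2 : ∀ t ∈ Set.Icc 0 T, HasDerivWithinAt F' (F'' t) (Set.Icc 0 T) t)
    (hcont : ContinuousOn F'' (Set.Icc 0 T))
    (hF0 : F 0 = 0) (hF'0 : F' 0 = 0)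
    (hFnonneg : ∀ t ∈ Set.Icc 0 T, 0 ≤ F t)
    (hF'nonneg : ∀ t ∈ Set.Icc 0 T, 0 ≤ F' t)
    (hF'' : ∀ t ∈ Set.Icc 0 T, F'' t ≤ A * F t ^ (1 - α)) :
    ∀ t ∈ Set.Icc 0 T, F t ≤ ((α / 2) * Real.sqrt (2 * A) * t) ^ (2 / α) := by
  have h2α : (1:ℝ) ≤ 2 - α := by linarith
  have h2αpos : (0:ℝ) < 2 - α := by linarith
  set K : ℝ := 2 * A / (2 - α) with hKdef
  have hKnonneg : 0 ≤ K := div_nonneg (by linarith) (le_of_lt h2αpos)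
  have hK2 : K * (2 - α) = 2 * A := by
    rw [hKdef]; exact div_mul_cancel₀ _ (ne_of_gt h2αpos)
  set G : ℝ → ℝ := fun t => F' t ^ 2 - K * F t ^ (2 - α) with hGdef
  have hGder : ∀ t ∈ Set.Icc 0 T,
      HasDerivWithinAt G
        (2 * F' t * F'' t - K * ((2 - α) * F t ^ (1 - α) * F' t)) (Set.Icc 0 T) t := by
    intro t ht
    have h1 : HasDerivWithinAt (fun t => F' t ^ 2) (2 * F' t * F'' t) (Set.Icc 0 T) t := by
      exact (by simpa using (hder2 t ht).pow 2 : HasDerivWithinAt (F' ^ 2) (2 * F' t * F'' t) (Set.Icc 0 T) t)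
    have h2 : HasDerivWithinAt (fun t => F t ^ (2 - α))
        ((2 - α) * F t ^ (1 - α) * F' t) (Set.Icc 0 T) t := by
      have := (hder t ht).rpow_const (p := 2 - α) (Or.inr h2α)
      convert this using 1
      rw [show (2:ℝ) - α - 1 = 1 - α by ring]
      ring
    exact h1.sub (h2.const_mul K)
  have hGanti : AntitoneOn G (Set.Icc 0 T) := by
    apply antitoneOn_of_deriv_nonpos (convex_Icc 0 T)
    · exact fun x hx => (hGder x hx).continuousWithinAt
    · intro x hx
      rw [interior_Icc] at hx
      exact (((hGder x (Set.Ioo_subset_Icc_self hx)).hasDerivAt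
        (Icc_mem_nhds hx.1 hx.2)).differentiableAt).differentiableWithinAt
    · intro x hx
      rw [interior_Icc] at hx
      have hx' := Set.Ioo_subset_Icc_self hx
      rw [((hGder x hx').hasDerivAt (Icc_mem_nhds hx.1 hx.2)).deriv]
      have h1 : F'' x ≤ A * F x ^ (1 - α) := hF'' x hx'
      have h2 : 0 ≤ F' x := hF'nonneg x hx'
      have h3 : K * ((2 - α) * F x ^ (1 - α) * F' x) = 2 * A * (F x ^ (1 - α) * F' x) := by
        rw [← hK2]; ring
      have h4 : F' x * F'' x ≤ F' x * (A * F x ^ (1 - α)) :=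
        mul_le_mul_of_nonneg_left h1 h2
      rw [h3]
      nlinarith [h4]
  have hG0 : G 0 = 0 := by
    simp only [hGdef, hF0, hF'0]
    rw [Real.zero_rpow (by linarith : (2:ℝ) - α ≠ 0)]
    ring
  have hGle : ∀ t ∈ Set.Icc 0 T, F' t ^ 2 ≤ 2 * A * F t ^ (2 - α) := by
    intro t ht
    have h0mem : (0:ℝ) ∈ Set.Icc 0 T := ⟨le_refl 0, le_of_lt hT⟩
    have := hGanti h0mem ht ht.1
    rw [hG0] at this
    have hKle : K * F t ^ (2 - α) ≤ 2 * A * F t ^ (2 - α) := by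
      apply mul_le_mul_of_nonneg_right _ (Real.rpow_nonneg (hFnonneg t ht) _)
      rw [hKdef]
      rw [div_le_iff₀ h2αpos]
      nlinarith
    have : F' t ^ 2 ≤ K * F t ^ (2 - α) := by
      simp only [hGdef] at this; linarith
    linarith
  -- bound F' t ≤ √(2A) * (F t)^((2-α)/2)
  have hF'le : ∀ t ∈ Set.Icc 0 T, F' t ≤ Real.sqrt (2 * A) * F t ^ ((2 - α) / 2) := by
    intro t ht
    have h1 : F' t = Real.sqrt (F' t ^ 2) := (Real.sqrt_sq (hF'nonneg t ht)).symm
    rw [h1]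
    have h2 : Real.sqrt (F' t ^ 2) ≤ Real.sqrt (2 * A * F t ^ (2 - α)) :=
      Real.sqrt_le_sqrt (hGle t ht)
    refine h2.trans_eq ?_
    rw [Real.sqrt_mul (by linarith : (0:ℝ) ≤ 2 * A)]
    congr 1
    rw [Real.sqrt_eq_rpow, ← Real.rpow_mul (hFnonneg t ht)]
    congr 1
    ring
  set c : ℝ := α / 2 * Real.sqrt (2 * A) with hcdef
  have hcnonneg : 0 ≤ c := mul_nonneg (by linarith) (Real.sqrt_nonneg _)
  -- key: for every ε > 0, (F t + ε)^(α/2) ≤ ε^(α/2) + c * t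
  have key : ∀ ε > 0, ∀ t ∈ Set.Icc 0 T, (F t + ε) ^ (α / 2) ≤ ε ^ (α / 2) + c * t := by
    intro ε hε t ht
    have hpos : ∀ s ∈ Set.Icc 0 T, 0 < F s + ε := fun s hs => by
      have := hFnonneg s hs; linarith
    have hHder : ∀ s ∈ Set.Icc 0 T,
        HasDerivWithinAt (fun u => (F u + ε) ^ (α / 2))
          (F' s * (α / 2) * (F s + ε) ^ (α / 2 - 1)) (Set.Icc 0 T) s := by
      intro s hs
      exact ((hder s hs).add_const ε).rpow_const (Or.inl (ne_of_gt (hpos s hs)))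
    have hbound : ∀ s ∈ Set.Ico 0 T,
        ‖F' s * (α / 2) * (F s + ε) ^ (α / 2 - 1)‖ ≤ c := by
      intro s hs
      have hs' : s ∈ Set.Icc 0 T := Set.Ico_subset_Icc_self hs
      have hrp : 0 < (F s + ε) ^ (α / 2 - 1) := Real.rpow_pos_of_pos (hpos s hs') _
      have hnn : 0 ≤ F' s * (α / 2) * (F s + ε) ^ (α / 2 - 1) :=
        mul_nonneg (mul_nonneg (hF'nonneg s hs') (by linarith)) (le_of_lt hrp)
      rw [Real.norm_eq_abs, abs_of_nonneg hnn]
      have h1 : F' s ≤ Real.sqrt (2 * A) * (F s + ε) ^ ((2 - α) / 2) := by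
        refine (hF'le s hs').trans ?_
        apply mul_le_mul_of_nonneg_left _ (Real.sqrt_nonneg _)
        exact Real.rpow_le_rpow (hFnonneg s hs') (by linarith) (by linarith)
      calc F' s * (α / 2) * (F s + ε) ^ (α / 2 - 1)
          ≤ Real.sqrt (2 * A) * (F s + ε) ^ ((2 - α) / 2) * (α / 2) *
              (F s + ε) ^ (α / 2 - 1) := by
            apply mul_le_mul_of_nonneg_right _ (le_of_lt hrp)
            exact mul_le_mul_of_nonneg_right h1 (by linarith)
        _ = c * ((F s + ε) ^ ((2 - α) / 2) * (F s + ε) ^ (α / 2 - 1)) := by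
            rw [hcdef]; ring
        _ = c := by
            rw [← Real.rpow_add (hpos s hs')]
            rw [show (2 - α) / 2 + (α / 2 - 1) = 0 by ring, Real.rpow_zero, mul_one]
    have := norm_image_sub_le_of_norm_deriv_le_segment' hHder hbound t ht
    rw [hF0, zero_add, sub_zero] at this
    have habs : (F t + ε) ^ (α / 2) - ε ^ (α / 2) ≤ c * t :=
      (le_abs_self _).trans this
    linarith
  -- let ε → 0
  have key2 : ∀ t ∈ Set.Icc 0 T, F t ^ (α / 2) ≤ c * t := by
    intro t ht
    refine le_of_forall_pos_le_add ?_
    intro δ hδ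
    set ε : ℝ := δ ^ (2 / α) with hεdef
    have hεpos : 0 < ε := Real.rpow_pos_of_pos hδ _
    have hεpow : ε ^ (α / 2) = δ := by
      rw [hεdef, ← Real.rpow_mul (le_of_lt hδ)]
      rw [show 2 / α * (α / 2) = 1 by field_simp]
      exact Real.rpow_one δ
    have h1 : F t ^ (α / 2) ≤ (F t + ε) ^ (α / 2) :=
      Real.rpow_le_rpow (hFnonneg t ht) (by linarith) (by linarith)
    have h2 := key ε hεpos t ht
    rw [hεpow] at h2
    linarith
  intro t ht
  have h1 : F t = (F t ^ (α / 2)) ^ (2 / α) := by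
    rw [← Real.rpow_mul (hFnonneg t ht)]
    rw [show α / 2 * (2 / α) = 1 by field_simp]
    exact (Real.rpow_one _).symm
  rw [h1, show (α / 2) * Real.sqrt (2 * A) * t = c * t by rw [hcdef]]
  exact Real.rpow_le_rpow (Real.rpow_nonneg (hFnonneg t ht) _) (key2 t ht)
    (by positivity)
end

section
/- Let n ∈ {2,3}, T > 0 and C > 0. Let D : [0,T] → [0,∞) be continuous and suppose that for every real p > n and every t ∈ [0,T], D(t) ≤ C p² ∫₀^t ∫₀^s D(τ)^{1−n/p} dτ ds. Then D(t) = 0 for all t ∈ [0,T]. -/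
open MeasureTheory

namespace Stmt6Aux

/-- exponent sequence `m q k = 2q(1-θ^k)` with `θ = 1 - 1/q`. -/
noncomputable def mseq (q : ℕ) (k : ℕ) : ℝ := 2 * q * (1 - (1 - 1/(q:ℝ))^k)

/-- coefficient sequence of the iteration. -/
noncomputable def bseq (A M θ : ℝ) (m : ℕ → ℝ) : ℕ → ℝ
  | 0 => M
  | (k+1) => A * (bseq A M θ m k) ^ θ / ((θ * m k + 1) * (θ * m k + 2))

lemma bseq_succ (A M θ : ℝ) (m : ℕ → ℝ) (k : ℕ) :
    bseq A M θ m (k+1)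
      = A * (bseq A M θ m k) ^ θ / ((θ * m k + 1) * (θ * m k + 2)) := rfl

lemma theta_pos {q : ℕ} (hq : 2 ≤ q) : 0 < 1 - 1/(q:ℝ) := by
  have hq' : (2:ℝ) ≤ q := by exact_mod_cast hq
  have : 1/(q:ℝ) ≤ 1/2 := by
    apply one_div_le_one_div_of_le <;> linarith
  linarith

lemma theta_lt_one {q : ℕ} (hq : 2 ≤ q) : 1 - 1/(q:ℝ) < 1 := by
  have hq' : (2:ℝ) ≤ q := by exact_mod_cast hq
  have : 0 < 1/(q:ℝ) := by positivity
  linarith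

lemma mseq_zero (q : ℕ) : mseq q 0 = 0 := by simp [mseq]

lemma mseq_succ {q : ℕ} (hq : 2 ≤ q) (k : ℕ) :
    mseq q (k+1) = (1 - 1/(q:ℝ)) * mseq q k + 2 := by
  have hq0 : (q:ℝ) ≠ 0 := by positivity
  simp only [mseq, pow_succ]
  field_simp
  ring

lemma mseq_nonneg {q : ℕ} (hq : 2 ≤ q) (k : ℕ) : 0 ≤ mseq q k := by
  have h1 : (1 - 1/(q:ℝ))^k ≤ 1 := by
    apply pow_le_one₀ (theta_pos hq).le
    have : 0 < 1/(q:ℝ) := by positivity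
    linarith
  have : (0:ℝ) ≤ q := by positivity
  have : (0:ℝ) ≤ 2 * q := by linarith
  unfold mseq; nlinarith

lemma mseq_mono {q : ℕ} (hq : 2 ≤ q) : Monotone (mseq q) := by
  apply monotone_nat_of_le_succ
  intro k
  have h := pow_le_pow_of_le_one (theta_pos hq).le (theta_lt_one hq).le (Nat.le_succ k)
  have : (0:ℝ) ≤ 2 * q := by positivity
  simp only [Nat.succ_eq_add_one] at h
  unfold mseq
  nlinarith [mul_le_mul_of_nonneg_left h this]

lemma theta_pow_q_le {q : ℕ} (hq : 2 ≤ q) : (1 - 1/(q:ℝ))^q ≤ 1/2 := by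
  have hq0 : (0:ℝ) < q := by
    have : 0 < q := lt_of_lt_of_le (by norm_num) hq
    exact_mod_cast this
  have h1 : 1 - 1/(q:ℝ) ≤ Real.exp (-(1/(q:ℝ))) := by
    have := Real.add_one_le_exp (-(1/(q:ℝ)))
    linarith
  have h2 : (1 - 1/(q:ℝ))^q ≤ (Real.exp (-(1/(q:ℝ))))^q :=
    pow_le_pow_left₀ (theta_pos hq).le h1 q
  have h3 : (Real.exp (-(1/(q:ℝ))))^q = Real.exp (-1) := by
    rw [← Real.exp_nat_mul]
    congr 1
    field_simp
  have h4 : Real.exp (-1) ≤ 1/2 := by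
    rw [Real.exp_neg]
    rw [inv_le_comm₀ (Real.exp_pos 1) (by norm_num)]
    have := Real.add_one_lt_exp (x := 1) (by norm_num)
    linarith
  calc (1 - 1/(q:ℝ))^q ≤ Real.exp (-1) := h3 ▸ h2
    _ ≤ 1/2 := h4

lemma mseq_ge {q : ℕ} (hq : 2 ≤ q) {k : ℕ} (hk : q ≤ k) : (q:ℝ) ≤ mseq q k := by
  have h1 : (q:ℝ) ≤ mseq q q := by
    have := theta_pow_q_le hq
    have hq0 : (0:ℝ) < q := by
      have : 0 < q := lt_of_lt_of_le (by norm_num) hq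
      exact_mod_cast this
    unfold mseq; nlinarith
  exact h1.trans (mseq_mono hq hk)

lemma bseq_nonneg {A M θ : ℝ} {m : ℕ → ℝ} (hA : 0 ≤ A) (hM : 0 ≤ M) (hθ : 0 ≤ θ)
    (hm : ∀ k, 0 ≤ m k) : ∀ k, 0 ≤ bseq A M θ m k := by
  intro k
  induction k with
  | zero => exact hM
  | succ k ih =>
    have h1 : (0:ℝ) < θ * m k + 1 := by nlinarith [hm k]
    have h2 : (0:ℝ) < θ * m k + 2 := by nlinarith [hm k]
    have h3 : 0 ≤ (bseq A M θ m k) ^ θ := Real.rpow_nonneg ih θ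
    show 0 ≤ A * (bseq A M θ m k) ^ θ / ((θ * m k + 1) * (θ * m k + 2))
    positivity


lemma coefA_le {C C' : ℝ} (hC : 0 < C) (hC'C : C ≤ C') (hC'1 : 1 ≤ C') {n q : ℕ}
    (hn3 : n ≤ 3) : C * ((n:ℝ)*(q:ℝ))^2 ≤ 9*C' * ((q:ℝ)*(q:ℝ)) := by
  have hn3R : (n:ℝ) ≤ 3 := by exact_mod_cast hn3
  have hn0 : (0:ℝ) ≤ (n:ℝ) := by positivity
  have hn9 : (n:ℝ)^2 ≤ 9 := by nlinarith
  have hqq : (0:ℝ) ≤ (q:ℝ)*(q:ℝ) := by positivity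
  have h1 : C * (n:ℝ)^2 ≤ 9*C' := by nlinarith
  calc C * ((n:ℝ)*(q:ℝ))^2 = (C * (n:ℝ)^2) * ((q:ℝ)*(q:ℝ)) := by ring
    _ ≤ (9*C') * ((q:ℝ)*(q:ℝ)) := mul_le_mul_of_nonneg_right h1 hqq

lemma bstep {C' A M₀ θ : ℝ} {q k : ℕ} (hq : 2 ≤ q) (hθdef : θ = 1 - 1/(q:ℝ))
    (hM₀0 : 0 ≤ M₀) (hA0 : 0 ≤ A) (hC'1 : 1 ≤ C')
    (hA9 : A ≤ 9*C' * ((q:ℝ)*(q:ℝ))) (hk : q ≤ k) :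
    bseq A M₀ θ (mseq q) (k+1) ≤ (9*C') * (bseq A M₀ θ (mseq q) k)^θ := by
  have hqR : (2:ℝ) ≤ (q:ℝ) := by exact_mod_cast hq
  have hθ0 : 0 < θ := hθdef ▸ theta_pos hq
  have hb0 : ∀ j, 0 ≤ bseq A M₀ θ (mseq q) j :=
    bseq_nonneg hA0 hM₀0 hθ0.le (mseq_nonneg hq)
  have hm : (q:ℝ) ≤ mseq q k := mseq_ge hq hk
  have hθq : θ * (q:ℝ) = (q:ℝ) - 1 := by
    rw [hθdef]; field_simp
  have hθm : (q:ℝ) - 1 ≤ θ * mseq q k := by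
    rw [← hθq]
    exact mul_le_mul_of_nonneg_left hm hθ0.le
  have hden : (q:ℝ)*(q:ℝ) ≤ (θ * mseq q k + 1) * (θ * mseq q k + 2) := by nlinarith
  have hdenpos : (0:ℝ) < (θ * mseq q k + 1) * (θ * mseq q k + 2) := by nlinarith
  have hxθ : 0 ≤ (bseq A M₀ θ (mseq q) k)^θ := Real.rpow_nonneg (hb0 k) θ
  rw [bseq_succ, div_le_iff₀ hdenpos]
  calc A * (bseq A M₀ θ (mseq q) k)^θ
      ≤ (9*C' * ((q:ℝ)*(q:ℝ))) * (bseq A M₀ θ (mseq q) k)^θ :=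
        mul_le_mul_of_nonneg_right hA9 hxθ
    _ ≤ (9*C' * ((θ * mseq q k + 1) * (θ * mseq q k + 2))) * (bseq A M₀ θ (mseq q) k)^θ := by
        apply mul_le_mul_of_nonneg_right _ hxθ
        nlinarith
    _ = 9*C' * (bseq A M₀ θ (mseq q) k)^θ * ((θ * mseq q k + 1) * (θ * mseq q k + 2)) := by
        ring

lemma btail {C' A M₀ θ : ℝ} {q : ℕ} (hq : 2 ≤ q) (hθdef : θ = 1 - 1/(q:ℝ))
    (hM₀0 : 0 ≤ M₀) (hA0 : 0 ≤ A) (hC'1 : 1 ≤ C')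
    (hA9 : A ≤ 9*C' * ((q:ℝ)*(q:ℝ))) :
    ∀ i, bseq A M₀ θ (mseq q) (q+i)
      ≤ (9*C')^q * (max 1 (bseq A M₀ θ (mseq q) q))^(θ^i) := by
  have hθ0 : 0 < θ := hθdef ▸ theta_pos hq
  have hb0 : ∀ j, 0 ≤ bseq A M₀ θ (mseq q) j :=
    bseq_nonneg hA0 hM₀0 hθ0.le (mseq_nonneg hq)
  set b : ℕ → ℝ := bseq A M₀ θ (mseq q) with hbdef
  have h9C' : (1:ℝ) ≤ 9*C' := by linarith
  set β : ℝ := (9*C')^q with hβdef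
  have hβ1 : (1:ℝ) ≤ β := one_le_pow₀ h9C'
  have hβpos : (0:ℝ) < β := by linarith
  set Γ : ℝ := max 1 (b q) with hΓdef
  have hΓ1 : (1:ℝ) ≤ Γ := le_max_left _ _
  have hΓpos : (0:ℝ) < Γ := by linarith
  have hβθ : β ^ ((1:ℝ) - θ) = 9*C' := by
    rw [hβdef, ← Real.rpow_natCast (9*C') q, ← Real.rpow_mul (by linarith : (0:ℝ) ≤ 9*C')]
    have hq0 : (q:ℝ) ≠ 0 := by
      have : (2:ℝ) ≤ (q:ℝ) := by exact_mod_cast hq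
      linarith
    have hqθ : (q:ℝ) * (1 - θ) = 1 := by
      rw [hθdef]; field_simp; ring
    rw [hqθ, Real.rpow_one]
  intro i
  induction i with
  | zero =>
    simp only [Nat.add_zero, pow_zero, Real.rpow_one]
    calc b q ≤ Γ := le_max_right _ _
      _ ≤ β * Γ := by nlinarith
  | succ i ihi =>
    have h1 : b (q+(i+1)) ≤ 9*C' * (b (q+i))^θ :=
      bstep hq hθdef hM₀0 hA0 hC'1 hA9 (Nat.le_add_right q i)
    have h2 : (b (q+i))^θ ≤ (β * Γ^(θ^i))^θ := Real.rpow_le_rpow (hb0 _) ihi hθ0.le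
    have h3 : (β * Γ^(θ^i))^θ = β^θ * Γ^(θ^i * θ) := by
      rw [Real.mul_rpow hβpos.le (Real.rpow_nonneg hΓpos.le _), ← Real.rpow_mul hΓpos.le]
    have h5 : 9*C' * β^θ = β := by
      rw [← hβθ, ← Real.rpow_add hβpos]
      rw [show (1:ℝ)-θ+θ = 1 by ring, Real.rpow_one]
    calc b (q+(i+1)) ≤ 9*C' * (b (q+i))^θ := h1
      _ ≤ 9*C' * (β * Γ^(θ^i))^θ := by
          apply mul_le_mul_of_nonneg_left h2 (by linarith)
      _ = 9*C' * (β^θ * Γ^(θ^i*θ)) := by rw [h3]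
      _ = (9*C' * β^θ) * Γ^(θ^i*θ) := by ring
      _ = β * Γ^(θ^(i+1)) := by rw [h5, pow_succ]

lemma key (T C : ℝ) (hC : 0 < C) (n : ℕ) (hn1 : 1 ≤ n)
    (D : ℝ → ℝ) (hDcont : ContinuousOn D (Set.Icc 0 T))
    (hDnonneg : ∀ t ∈ Set.Icc 0 T, 0 ≤ D t)
    (hD : ∀ p : ℝ, (n : ℝ) < p → ∀ t ∈ Set.Icc 0 T,
      D t ≤ C * p ^ 2 * ∫ s in (0:ℝ)..t, ∫ τ in (0:ℝ)..s, D τ ^ (1 - (n : ℝ) / p))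
    (a : ℝ) (ha : a ∈ Set.Icc 0 T)
    (h0 : ∀ s ∈ Set.Icc 0 a, D s = 0)
    (q : ℕ) (hq : 2 ≤ q) (M₀ : ℝ) (hM₀ : ∀ t ∈ Set.Icc 0 T, D t ≤ M₀) :
    ∀ k, ∀ t ∈ Set.Icc a T,
      D t ≤ bseq (C * ((n:ℝ)*(q:ℝ))^2) M₀ (1 - 1/(q:ℝ)) (mseq q) k * (t - a) ^ (mseq q k) := by
  obtain ⟨ha0, haT⟩ := ha
  have hT0 : (0:ℝ) ≤ T := le_trans ha0 haT
  have hθ0 : 0 < 1 - 1/(q:ℝ) := theta_pos hq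
  set θ : ℝ := 1 - 1/(q:ℝ) with hθdef
  set A : ℝ := C * ((n:ℝ)*(q:ℝ))^2 with hAdef
  have hqR : (2:ℝ) ≤ (q:ℝ) := by exact_mod_cast hq
  have hnR : (1:ℝ) ≤ (n:ℝ) := by exact_mod_cast hn1
  have hA0 : 0 ≤ A := by rw [hAdef]; positivity
  have hM₀0 : 0 ≤ M₀ := le_trans (hDnonneg a ⟨ha0, haT⟩) (hM₀ a ⟨ha0, haT⟩)
  have hb0 : ∀ k, 0 ≤ bseq A M₀ θ (mseq q) k :=
    bseq_nonneg hA0 hM₀0 hθ0.le (mseq_nonneg hq)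
  have hDθcont : ContinuousOn (fun τ => D τ ^ θ) (Set.Icc 0 T) :=
    hDcont.rpow_const (fun x _ => Or.inr hθ0.le)
  have hzero : ∀ τ ∈ Set.Icc 0 a, D τ ^ θ = 0 := by
    intro τ hτ
    rw [h0 τ hτ, Real.zero_rpow (ne_of_gt hθ0)]
  have hint : ∀ u v : ℝ, 0 ≤ u → u ≤ v → v ≤ T →
      IntervalIntegrable (fun τ => D τ ^ θ) volume u v := by
    intro u v h1 h2 h3
    apply ContinuousOn.intervalIntegrable
    rw [Set.uIcc_of_le h2]
    exact hDθcont.mono (Set.Icc_subset_Icc h1 h3)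
  have hg0 : ∀ s ∈ Set.Icc (0:ℝ) a, (∫ τ in (0:ℝ)..s, D τ ^ θ) = 0 := by
    intro s hs
    rw [intervalIntegral.integral_congr (g := fun _ => (0:ℝ)) ?_, intervalIntegral.integral_zero]
    intro τ hτ
    rw [Set.uIcc_of_le hs.1] at hτ
    exact hzero τ ⟨hτ.1, hτ.2.trans hs.2⟩
  have hgcont : ContinuousOn (fun s => ∫ τ in (0:ℝ)..s, D τ ^ θ) (Set.Icc 0 T) := by
    have h := intervalIntegral.continuousOn_primitive_interval
      (a := 0) (b := T) (f := fun τ => D τ ^ θ) (μ := volume) ?_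
    · rwa [Set.uIcc_of_le hT0] at h
    · rw [Set.uIcc_of_le hT0]
      exact hDθcont.integrableOn_Icc
  intro k
  induction k with
  | zero =>
    intro t ht
    rw [mseq_zero, Real.rpow_zero]
    show D t ≤ M₀ * 1
    rw [mul_one]
    exact hM₀ t ⟨le_trans ha0 ht.1, ht.2⟩
  | succ k ih =>
    intro t ht
    obtain ⟨hat, htT⟩ := ht
    have ht0 : (0:ℝ) ≤ t := le_trans ha0 hat
    set B : ℝ := bseq A M₀ θ (mseq q) k with hBdef
    have hBnn : 0 ≤ B := hb0 k
    set e : ℝ := θ * mseq q k with hedef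
    have he0 : 0 ≤ e := mul_nonneg hθ0.le (mseq_nonneg hq k)
    have he1 : (0:ℝ) < e + 1 := by linarith
    have he2 : (0:ℝ) < e + 2 := by linarith
    have hpt : ∀ τ ∈ Set.Icc a T, D τ ^ θ ≤ B ^ θ * (τ - a) ^ e := by
      intro τ hτ
      have hτ0T : τ ∈ Set.Icc 0 T := ⟨le_trans ha0 hτ.1, hτ.2⟩
      have hτa : (0:ℝ) ≤ τ - a := sub_nonneg.2 hτ.1
      have h2 : D τ ^ θ ≤ (B * (τ - a) ^ mseq q k) ^ θ :=
        Real.rpow_le_rpow (hDnonneg τ hτ0T) (ih τ hτ) hθ0.le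
      rwa [Real.mul_rpow hBnn (Real.rpow_nonneg hτa _), ← Real.rpow_mul hτa,
        mul_comm (mseq q k) θ, ← hedef] at h2
    have hinner : ∀ s ∈ Set.Icc a t,
        (∫ τ in (0:ℝ)..s, D τ ^ θ) ≤ (B^θ/(e+1)) * (s - a)^(e+1) := by
      intro s hs
      have hsa : a ≤ s := hs.1
      have hsT : s ≤ T := hs.2.trans htT
      have i1 : IntervalIntegrable (fun τ => D τ ^ θ) volume 0 a := hint 0 a le_rfl ha0 haT
      have i2 : IntervalIntegrable (fun τ => D τ ^ θ) volume a s := hint a s ha0 hsa hsT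
      have hsplit : (∫ τ in (0:ℝ)..s, D τ ^ θ) = ∫ τ in a..s, D τ ^ θ := by
        rw [← intervalIntegral.integral_add_adjacent_intervals i1 i2,
          hg0 a ⟨ha0, le_rfl⟩, zero_add]
      have hbcont : ContinuousOn (fun τ => B^θ * (τ - a)^e) (Set.uIcc a s) := by
        apply ContinuousOn.mul continuousOn_const
        exact ((continuous_id.sub continuous_const).continuousOn).rpow_const
          (fun x _ => Or.inr he0)
      have i3 : IntervalIntegrable (fun τ => B^θ * (τ - a)^e) volume a s :=
        hbcont.intervalIntegrable
      have hmono : (∫ τ in a..s, D τ ^ θ) ≤ ∫ τ in a..s, B^θ * (τ - a)^e :=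
        intervalIntegral.integral_mono_on hsa i2 i3
          (fun τ hτ => hpt τ ⟨hτ.1, hτ.2.trans hsT⟩)
      have hcomp : (∫ τ in a..s, B^θ * (τ - a)^e) = (B^θ/(e+1)) * (s-a)^(e+1) := by
        rw [intervalIntegral.integral_const_mul]
        rw [intervalIntegral.integral_comp_sub_right (fun u => u ^ e) a, sub_self]
        rw [integral_rpow (Or.inl (by linarith : (-1:ℝ) < e))]
        rw [Real.zero_rpow (ne_of_gt he1)]
        ring
      rw [hsplit]
      exact hmono.trans (le_of_eq hcomp)
    have o1 : IntervalIntegrable (fun s => ∫ τ in (0:ℝ)..s, D τ ^ θ) volume 0 a := by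
      apply ContinuousOn.intervalIntegrable
      rw [Set.uIcc_of_le ha0]
      exact hgcont.mono (Set.Icc_subset_Icc le_rfl haT)
    have o2 : IntervalIntegrable (fun s => ∫ τ in (0:ℝ)..s, D τ ^ θ) volume a t := by
      apply ContinuousOn.intervalIntegrable
      rw [Set.uIcc_of_le hat]
      exact hgcont.mono (Set.Icc_subset_Icc ha0 htT)
    have houter0 : (∫ s in (0:ℝ)..a, ∫ τ in (0:ℝ)..s, D τ ^ θ) = 0 := by
      rw [intervalIntegral.integral_congr (g := fun _ => (0:ℝ)) ?_, intervalIntegral.integral_zero]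
      intro s hs
      rw [Set.uIcc_of_le ha0] at hs
      exact hg0 s hs
    have hsplit2 : (∫ s in (0:ℝ)..t, ∫ τ in (0:ℝ)..s, D τ ^ θ)
        = ∫ s in a..t, ∫ τ in (0:ℝ)..s, D τ ^ θ := by
      rw [← intervalIntegral.integral_add_adjacent_intervals o1 o2, houter0, zero_add]
    have hbcont2 : ContinuousOn (fun s => (B^θ/(e+1)) * (s - a)^(e+1)) (Set.uIcc a t) := by
      apply ContinuousOn.mul continuousOn_const
      exact ((continuous_id.sub continuous_const).continuousOn).rpow_const
        (fun x _ => Or.inr he1.le)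
    have i4 : IntervalIntegrable (fun s => (B^θ/(e+1)) * (s - a)^(e+1)) volume a t :=
      hbcont2.intervalIntegrable
    have hmono2 : (∫ s in a..t, ∫ τ in (0:ℝ)..s, D τ ^ θ)
        ≤ ∫ s in a..t, (B^θ/(e+1)) * (s - a)^(e+1) :=
      intervalIntegral.integral_mono_on hat o2 i4 hinner
    have hcomp2 : (∫ s in a..t, (B^θ/(e+1)) * (s - a)^(e+1))
        = (B^θ/(e+1)) * ((t-a)^(e+2)/(e+2)) := by
      rw [intervalIntegral.integral_const_mul]
      rw [intervalIntegral.integral_comp_sub_right (fun u => u ^ (e+1)) a, sub_self]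
      rw [integral_rpow (Or.inl (by linarith : (-1:ℝ) < e+1))]
      rw [Real.zero_rpow (ne_of_gt (by linarith : (0:ℝ) < e+1+1))]
      rw [show e+1+1 = e+2 by ring]
      ring
    have hp : (n:ℝ) < (n:ℝ)*(q:ℝ) := by nlinarith
    have hexp : 1 - (n:ℝ)/((n:ℝ)*(q:ℝ)) = θ := by
      have hn0 : (n:ℝ) ≠ 0 := by linarith
      have hq0 : (q:ℝ) ≠ 0 := by linarith
      rw [hθdef]
      field_simp
    have hDt := hD ((n:ℝ)*(q:ℝ)) hp t ⟨ht0, htT⟩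
    rw [hexp] at hDt
    calc D t ≤ A * ∫ s in (0:ℝ)..t, ∫ τ in (0:ℝ)..s, D τ ^ θ := hDt
      _ ≤ A * ((B^θ/(e+1)) * ((t-a)^(e+2)/(e+2))) := by
          apply mul_le_mul_of_nonneg_left _ hA0
          rw [hsplit2]
          exact hmono2.trans (le_of_eq hcomp2)
      _ = bseq A M₀ θ (mseq q) (k+1) * (t-a)^(mseq q (k+1)) := by
          rw [mseq_succ hq, ← hθdef, ← hedef]
          show A * ((B^θ/(e+1)) * ((t-a)^(e+2)/(e+2)))
            = A * B ^ θ / ((θ * mseq q k + 1) * (θ * mseq q k + 2)) * (t-a) ^ (e + 2)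
          rw [← hedef]
          field_simp

lemma local_zero (T C : ℝ) (hC : 0 < C) (n : ℕ) (hn1 : 1 ≤ n) (hn3 : n ≤ 3)
    (D : ℝ → ℝ) (hDcont : ContinuousOn D (Set.Icc 0 T))
    (hDnonneg : ∀ t ∈ Set.Icc 0 T, 0 ≤ D t)
    (hD : ∀ p : ℝ, (n : ℝ) < p → ∀ t ∈ Set.Icc 0 T,
      D t ≤ C * p ^ 2 * ∫ s in (0:ℝ)..t, ∫ τ in (0:ℝ)..s, D τ ^ (1 - (n : ℝ) / p))
    (a : ℝ) (ha : a ∈ Set.Icc 0 T)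
    (h0 : ∀ s ∈ Set.Icc 0 a, D s = 0) :
    ∀ t ∈ Set.Icc 0 T, t ≤ a + 1/(36 * max C 1) → D t = 0 := by
  obtain ⟨ha0, haT⟩ := ha
  have hT0 : (0:ℝ) ≤ T := le_trans ha0 haT
  set C' : ℝ := max C 1 with hC'def
  have hC'1 : (1:ℝ) ≤ C' := le_max_right C 1
  have hC'C : C ≤ C' := le_max_left C 1
  have hC'0 : (0:ℝ) < C' := by linarith
  obtain ⟨x, hxmem, hx⟩ := isCompact_Icc.exists_isMaxOn ⟨0, le_refl (0:ℝ), hT0⟩ hDcont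
  set M₀ : ℝ := D x with hM₀def
  have hM₀ : ∀ t ∈ Set.Icc (0:ℝ) T, D t ≤ M₀ := fun t htt => hx htt
  intro t ht htle
  rcases le_or_gt t a with hcase | hcase
  · exact h0 t ⟨ht.1, hcase⟩
  -- a < t
  have hta : (0:ℝ) < t - a := by linarith
  have hta1 : t - a ≤ 1/(36*C') := by linarith
  have htale : t - a ≤ 1 := by
    have h36 : (36:ℝ) ≤ 36*C' := by linarith
    have : 1/(36*C') ≤ 1/36 := by
      apply one_div_le_one_div_of_le <;> linarith
    linarith
  have hq4 : ∀ q : ℕ, 2 ≤ q → D t ≤ (1/4:ℝ)^q := by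
    intro q hq
    have hqR : (2:ℝ) ≤ (q:ℝ) := by exact_mod_cast hq
    have hθ0 : 0 < 1 - 1/(q:ℝ) := theta_pos hq
    have hθ1 : 1 - 1/(q:ℝ) < 1 := theta_lt_one hq
    have hM₀0 : 0 ≤ M₀ := le_trans (hDnonneg 0 ⟨le_refl 0, hT0⟩) (hM₀ 0 ⟨le_refl 0, hT0⟩)
    have hA0 : (0:ℝ) ≤ C * ((n:ℝ)*(q:ℝ))^2 := by positivity
    have hkey := key T C hC n hn1 D hDcont hDnonneg hD a ⟨ha0, haT⟩ h0 q hq M₀ hM₀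
    have hA9 : C * ((n:ℝ)*(q:ℝ))^2 ≤ 9*C' * ((q:ℝ)*(q:ℝ)) := coefA_le hC hC'C hC'1 hn3
    have htail := btail hq rfl hM₀0 hA0 hC'1 hA9
    set θ : ℝ := 1 - 1/(q:ℝ) with hθdef
    set b : ℕ → ℝ := bseq (C * ((n:ℝ)*(q:ℝ))^2) M₀ θ (mseq q) with hbdef
    set β : ℝ := (9*C')^q with hβdef
    set Γ : ℝ := max 1 (b q) with hΓdef
    have hβ1 : (1:ℝ) ≤ β := one_le_pow₀ (by linarith)
    have hβpos : (0:ℝ) < β := by linarith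
    have hΓ1 : (1:ℝ) ≤ Γ := le_max_left _ _
    have hΓpos : (0:ℝ) < Γ := by linarith
    have hDle : ∀ i, D t ≤ β * Γ^(θ^i) * (t-a)^((q:ℝ)) := by
      intro i
      have h1 := hkey (q+i) t ⟨hcase.le, ht.2⟩
      have h2 : (t-a)^(mseq q (q+i)) ≤ (t-a)^((q:ℝ)) :=
        Real.rpow_le_rpow_of_exponent_ge hta htale (mseq_ge hq (Nat.le_add_right q i))
      calc D t ≤ b (q+i) * (t-a)^(mseq q (q+i)) := h1
        _ ≤ (β * Γ^(θ^i)) * (t-a)^((q:ℝ)) :=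
            mul_le_mul (htail i) h2 (Real.rpow_nonneg hta.le _)
              (mul_nonneg hβpos.le (Real.rpow_nonneg hΓpos.le _))
    have hlim : Filter.Tendsto (fun i : ℕ => β * Γ^(θ^i) * (t-a)^((q:ℝ)))
        Filter.atTop (nhds (β * 1 * (t-a)^((q:ℝ)))) := by
      apply Filter.Tendsto.mul_const
      apply Filter.Tendsto.const_mul
      have h1 : Filter.Tendsto (fun i : ℕ => θ^i) Filter.atTop (nhds 0) :=
        tendsto_pow_atTop_nhds_zero_of_lt_one hθ0.le hθ1
      have h2 : Filter.Tendsto (fun i : ℕ => Real.exp (Real.log Γ * θ^i))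
          Filter.atTop (nhds (Real.exp (Real.log Γ * 0))) :=
        (Real.continuous_exp.tendsto _).comp (h1.const_mul _)
      rw [mul_zero, Real.exp_zero] at h2
      apply h2.congr
      intro i
      rw [Real.rpow_def_of_pos hΓpos]
    have hfin : D t ≤ β * 1 * (t-a)^((q:ℝ)) := ge_of_tendsto' hlim hDle
    have hnum : β * 1 * (t-a)^((q:ℝ)) ≤ (1/4:ℝ)^q := by
      rw [mul_one, Real.rpow_natCast, hβdef, ← mul_pow]
      apply pow_le_pow_left₀ (by nlinarith)
      calc 9*C' * (t-a) ≤ 9*C' * (1/(36*C')) :=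
            mul_le_mul_of_nonneg_left hta1 (by linarith)
        _ = 1/4 := by field_simp; ring
    linarith
  by_contra hne
  have hpos : 0 < D t := lt_of_le_of_ne (hDnonneg t ht) (Ne.symm hne)
  obtain ⟨N, hN⟩ := exists_pow_lt_of_lt_one hpos (by norm_num : (1/4:ℝ) < 1)
  have h1 := hq4 (max N 2) (le_max_right _ _)
  have h2 : (1/4:ℝ)^(max N 2) ≤ (1/4:ℝ)^N :=
    pow_le_pow_of_le_one (by norm_num) (by norm_num) (le_max_left _ _)
  linarith

end Stmt6Aux

/-- If `D : [0,T] → [0,∞)` is continuous and for every real `p > n`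
(`n ∈ {2,3}`) satisfies `D(t) ≤ C p² ∫₀ᵗ ∫₀ˢ D(τ)^{1-n/p} dτ ds` with `C` independent of
`p`, then `D ≡ 0` on `[0,T]`. -/
theorem stmt6 (n : ℕ) (hn : n = 2 ∨ n = 3) (T C : ℝ) (hT : 0 < T) (hC : 0 < C)
    (D : ℝ → ℝ) (hDcont : ContinuousOn D (Set.Icc 0 T))
    (hDnonneg : ∀ t ∈ Set.Icc 0 T, 0 ≤ D t)
    (hD : ∀ p : ℝ, (n : ℝ) < p → ∀ t ∈ Set.Icc 0 T,
      D t ≤ C * p ^ 2 * ∫ s in (0:ℝ)..t, ∫ τ in (0:ℝ)..s, D τ ^ (1 - (n : ℝ) / p)) :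
    ∀ t ∈ Set.Icc 0 T, D t = 0 := by
  have hn1 : 1 ≤ n := by rcases hn with h | h <;> omega
  have hn3 : n ≤ 3 := by rcases hn with h | h <;> omega
  set C' : ℝ := max C 1 with hC'def
  have hC'1 : (1:ℝ) ≤ C' := le_max_right C 1
  have hC'0 : (0:ℝ) < C' := by linarith
  set t₀ : ℝ := 1/(36*C') with ht₀def
  have ht₀pos : 0 < t₀ := by rw [ht₀def]; positivity
  -- D 0 = 0
  have hD0 : D 0 = 0 := by
    have h := hD ((n:ℝ)+1) (by linarith) 0 ⟨le_refl 0, hT.le⟩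
    rw [intervalIntegral.integral_same] at h
    have := hDnonneg 0 ⟨le_refl 0, hT.le⟩
    rw [mul_zero] at h
    linarith
  have main : ∀ k : ℕ, ∀ t ∈ Set.Icc (0:ℝ) T, t ≤ (k:ℝ) * t₀ → D t = 0 := by
    intro k
    induction k with
    | zero =>
      intro t ht htk
      simp only [Nat.cast_zero, zero_mul] at htk
      have : t = 0 := le_antisymm htk ht.1
      rw [this]
      exact hD0
    | succ k ih =>
      intro t ht htk
      set a : ℝ := min T ((k:ℝ) * t₀) with hadef
      have hkt₀ : (0:ℝ) ≤ (k:ℝ) * t₀ := by positivity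
      have ha : a ∈ Set.Icc (0:ℝ) T := ⟨le_min hT.le hkt₀, min_le_left _ _⟩
      have h0' : ∀ s ∈ Set.Icc (0:ℝ) a, D s = 0 := by
        intro s hs
        exact ih s ⟨hs.1, hs.2.trans (min_le_left _ _)⟩ (hs.2.trans (min_le_right _ _))
      have hloc := Stmt6Aux.local_zero T C hC n hn1 hn3 D hDcont hDnonneg hD a ha h0'
      apply hloc t ht
      rcases le_total T ((k:ℝ) * t₀) with hc | hc
      · have : a = T := min_eq_left hc
        rw [this]
        linarith [ht.2, ht₀pos.le]
      · have : a = (k:ℝ) * t₀ := min_eq_right hc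
        rw [this]
        push_cast at htk
        linarith
  intro t ht
  obtain ⟨k, hk⟩ := exists_nat_ge (T / t₀)
  apply main k t ht
  have : T ≤ (k:ℝ) * t₀ := by
    rw [div_le_iff₀ ht₀pos] at hk
    linarith
  linarith [ht.2]
end

section
/- Let n ≥ 1. There exists a constant C > 0 (depending only on n and independent of k) such that for every real k ≥ 1 and every nonnegative f ∈ L¹ ∩ L^∞(ℝⁿ×ℝⁿ) with ∫∫ |v|^k f(x,v) dx dv < ∞, the macroscopic density ρ_f(x) = ∫_{ℝⁿ} f(x,v) dv satisfies ‖ρ_f‖_{L^{(k+n)/n}(ℝⁿ)} ≤ C ‖f‖_{L^∞}^{k/(k+n)} ( ∫∫_{ℝⁿ×ℝⁿ} |v|^k f(x,v) dx dv )^{n/(k+n)}. -/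
open MeasureTheory Metric Real
open scoped ENNReal NNReal

lemma stmt7_ptwise (n : ℕ) (hn : 1 ≤ n) (k M : ℝ) (hk : 1 ≤ k) (hM : 0 ≤ M)
    (g : EuclideanSpace ℝ (Fin n) → ℝ) (hg0 : ∀ v, 0 ≤ g v)
    (hgi : Integrable g volume)
    (hgki : Integrable (fun v => ‖v‖ ^ k * g v) volume)
    (hgM : ∀ᵐ v, g v ≤ M) :
    ∫ v, g v ≤ ((volume (ball (0:EuclideanSpace ℝ (Fin n)) 1)).toReal + 1) *
      M ^ (k/(k+n)) * (∫ v, ‖v‖ ^ k * g v) ^ ((n:ℝ)/(k+n)) := by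
  haveI : Nontrivial (EuclideanSpace ℝ (Fin n)) :=
    Module.nontrivial_of_finrank_pos (R := ℝ) (by rw [finrank_euclideanSpace_fin]; omega)
  set ω : ℝ := (volume (ball (0:EuclideanSpace ℝ (Fin n)) 1)).toReal with hω
  have hω0 : 0 ≤ ω := ENNReal.toReal_nonneg
  set m : ℝ := ∫ v, ‖v‖ ^ k * g v with hm
  have hm0 : 0 ≤ m := integral_nonneg fun v => mul_nonneg (rpow_nonneg (norm_nonneg _) _) (hg0 v)
  have hkn : (0:ℝ) < k + n := by positivity
  have hknn : (0:ℝ) < (n:ℝ) := by exact_mod_cast hn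
  rcases eq_or_lt_of_le hM with hM0 | hMpos
  · have h1 : ∫ v, g v ≤ 0 := by
      have h : g =ᵐ[volume] 0 := by
        filter_upwards [hgM] with v hv
        have := hg0 v; simp only [Pi.zero_apply]; linarith [hv, hM0]
      simp [integral_eq_zero_of_ae h]
    have h2 : M ^ (k/(k+n)) = 0 := by
      rw [← hM0]; exact Real.zero_rpow (by positivity)
    rw [h2]; simp only [mul_zero, zero_mul]
    exact h1
  rcases eq_or_lt_of_le hm0 with hmz | hmpos
  · have hzero : (fun v => ‖v‖ ^ k * g v) =ᵐ[volume] 0 :=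
      (integral_eq_zero_iff_of_nonneg
        (fun v => mul_nonneg (rpow_nonneg (norm_nonneg _) _) (hg0 v)) hgki).mp hmz.symm
    have hgz : g =ᵐ[volume] 0 := by
      have hns : (volume ({(0:EuclideanSpace ℝ (Fin n))} : Set (EuclideanSpace ℝ (Fin n)))) = 0 :=
        measure_singleton _
      filter_upwards [hzero,
        (ae_iff.mpr (by simpa using hns) : ∀ᵐ v : EuclideanSpace ℝ (Fin n), v ≠ 0)] with v hv hv0
      have hnv : (0:ℝ) < ‖v‖ ^ k := rpow_pos_of_pos (norm_pos_iff.mpr hv0) _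
      rcases mul_eq_zero.mp hv with h | h
      · exact absurd h hnv.ne'
      · exact h
    have h0 : ∫ v, g v = 0 := integral_eq_zero_of_ae hgz
    rw [h0]
    positivity
  set R : ℝ := (m / M) ^ (1/(k+n)) with hR
  have hMm : 0 < m / M := div_pos hmpos hMpos
  have hRpos : 0 < R := rpow_pos_of_pos hMm _
  have hsplit : ∫ v, g v = (∫ v in ball (0:EuclideanSpace ℝ (Fin n)) R, g v)
      + ∫ v in (ball (0:EuclideanSpace ℝ (Fin n)) R)ᶜ, g v :=
    (integral_add_compl measurableSet_ball hgi).symm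
  have hball : ∫ v in ball (0:EuclideanSpace ℝ (Fin n)) R, g v ≤ M * (ω * R ^ (n:ℕ)) := by
    have h1 : ‖∫ v in ball (0:EuclideanSpace ℝ (Fin n)) R, g v‖
        ≤ M * (volume (ball (0:EuclideanSpace ℝ (Fin n)) R)).toReal :=
      norm_setIntegral_le_of_norm_le_const_ae measure_ball_lt_top
        ((ae_restrict_of_ae hgM).mono fun v hv => by
          rw [Real.norm_eq_abs, abs_of_nonneg (hg0 v)]; exact hv)
    have h2 : (volume (ball (0:EuclideanSpace ℝ (Fin n)) R)).toReal = R ^ (n:ℕ) * ω := by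
      rw [Measure.addHaar_ball _ _ hRpos.le, finrank_euclideanSpace_fin,
        ENNReal.toReal_mul, ENNReal.toReal_ofReal (by positivity)]
    calc ∫ v in ball (0:EuclideanSpace ℝ (Fin n)) R, g v
        ≤ ‖∫ v in ball (0:EuclideanSpace ℝ (Fin n)) R, g v‖ := le_norm_self _
      _ ≤ M * (volume (ball (0:EuclideanSpace ℝ (Fin n)) R)).toReal := h1
      _ = M * (ω * R ^ (n:ℕ)) := by rw [h2]; ring
  have hcompl : ∫ v in (ball (0:EuclideanSpace ℝ (Fin n)) R)ᶜ, g v ≤ R ^ (-k) * m := by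
    have hmono : ∫ v in (ball (0:EuclideanSpace ℝ (Fin n)) R)ᶜ, g v
        ≤ ∫ v in (ball (0:EuclideanSpace ℝ (Fin n)) R)ᶜ, R ^ (-k) * (‖v‖ ^ k * g v) := by
      apply setIntegral_mono_on hgi.integrableOn
        ((hgki.const_mul _).integrableOn) measurableSet_ball.compl
      intro v hv
      have hvR : R ≤ ‖v‖ := by
        simpa [mem_ball, dist_zero_right, not_lt] using hv
      have h1 : 1 ≤ (‖v‖ / R) ^ k :=
        Real.one_le_rpow ((le_div_iff₀ hRpos).mpr (by simpa using hvR)) (by linarith)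
      have h2 : (‖v‖ / R) ^ k = R ^ (-k) * ‖v‖ ^ k := by
        rw [Real.div_rpow (norm_nonneg _) hRpos.le, Real.rpow_neg hRpos.le]
        ring
      calc g v = 1 * g v := (one_mul _).symm
        _ ≤ (‖v‖ / R) ^ k * g v := mul_le_mul_of_nonneg_right h1 (hg0 v)
        _ = R ^ (-k) * (‖v‖ ^ k * g v) := by rw [h2]; ring
    refine hmono.trans ?_
    rw [integral_const_mul]
    apply mul_le_mul_of_nonneg_left _ (rpow_nonneg hRpos.le _)
    exact setIntegral_le_integral hgki
      (Filter.Eventually.of_forall fun v => mul_nonneg (rpow_nonneg (norm_nonneg _) _) (hg0 v))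
  have hRn : R ^ (n:ℕ) = (m / M) ^ ((n:ℝ)/(k+n)) := by
    rw [hR, ← Real.rpow_natCast ((m / M) ^ (1/(k+n))) n, ← Real.rpow_mul hMm.le]
    congr 1; field_simp
  have hRk : R ^ (-k) = (m / M) ^ (-(k/(k+n))) := by
    rw [hR, ← Real.rpow_mul hMm.le]
    congr 1; field_simp
  have e1 : M ^ (k/(k+n)) = M / M ^ ((n:ℝ)/(k+n)) := by
    rw [eq_div_iff (ne_of_gt (rpow_pos_of_pos hMpos _)), ← Real.rpow_add hMpos]
    have h : k/(k+(n:ℝ)) + (n:ℝ)/(k+n) = 1 := by rw [← add_div, div_self hkn.ne']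
    rw [h, Real.rpow_one]
  have e2 : m ^ ((n:ℝ)/(k+n)) = m / m ^ (k/(k+n)) := by
    rw [eq_div_iff (ne_of_gt (rpow_pos_of_pos hmpos _)), ← Real.rpow_add hmpos]
    have h : (n:ℝ)/(k+n) + k/(k+(n:ℝ)) = 1 := by rw [← add_div]; rw [add_comm]; exact div_self hkn.ne'
    rw [h, Real.rpow_one]
  have key1 : M * (m / M) ^ ((n:ℝ)/(k+n)) = M ^ (k/(k+n)) * m ^ ((n:ℝ)/(k+n)) := by
    rw [Real.div_rpow hm0 hMpos.le, e1]
    field_simp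
  have key2 : (m / M) ^ (-(k/(k+n))) * m = M ^ (k/(k+n)) * m ^ ((n:ℝ)/(k+n)) := by
    rw [Real.rpow_neg hMm.le, Real.div_rpow hm0 hMpos.le, e2]
    have hmb : m ^ (k/(k+(n:ℝ))) ≠ 0 := ne_of_gt (rpow_pos_of_pos hmpos _)
    have hMb : M ^ (k/(k+(n:ℝ))) ≠ 0 := ne_of_gt (rpow_pos_of_pos hMpos _)
    field_simp
  calc ∫ v, g v = (∫ v in ball (0:EuclideanSpace ℝ (Fin n)) R, g v)
      + ∫ v in (ball (0:EuclideanSpace ℝ (Fin n)) R)ᶜ, g v := hsplit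
    _ ≤ M * (ω * R ^ (n:ℕ)) + R ^ (-k) * m := add_le_add hball hcompl
    _ = ω * (M * (m / M) ^ ((n:ℝ)/(k+n))) + (m / M) ^ (-(k/(k+n))) * m := by
        rw [hRn, hRk]; ring
    _ = (ω + 1) * M ^ (k/(k+n)) * m ^ ((n:ℝ)/(k+n)) := by rw [key1, key2]; ring

/-- Velocity moments control the `L^p` norms of the macroscopic density:
for `n ≥ 1` there is `C > 0` (independent of `k`) such that for every real `k ≥ 1` and every
nonnegative `f ∈ L¹ ∩ L^∞(ℝⁿ×ℝⁿ)` with finite `k`-th velocity moment,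
`‖ρ_f‖_{L^{(k+n)/n}} ≤ C ‖f‖_{L^∞}^{k/(k+n)} (∫∫ |v|^k f dx dv)^{n/(k+n)}`. -/
theorem stmt7 (n : ℕ) (hn : 1 ≤ n) :
    ∃ C : ℝ, 0 < C ∧
      ∀ k : ℝ, 1 ≤ k →
        ∀ f : EuclideanSpace ℝ (Fin n) × EuclideanSpace ℝ (Fin n) → ℝ,
          (∀ z, 0 ≤ f z) →
          MemLp f 1 volume → MemLp f ⊤ volume →
          Integrable (fun z : EuclideanSpace ℝ (Fin n) × EuclideanSpace ℝ (Fin n) =>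
            ‖z.2‖ ^ k * f z) volume →
          eLpNorm (fun x : EuclideanSpace ℝ (Fin n) => ∫ v, f (x, v))
              (ENNReal.ofReal ((k + n) / n)) volume
            ≤ ENNReal.ofReal (C * (eLpNorm f ⊤ volume).toReal ^ (k / (k + n)) *
                (∫ z : EuclideanSpace ℝ (Fin n) × EuclideanSpace ℝ (Fin n),
                  ‖z.2‖ ^ k * f z) ^ ((n : ℝ) / (k + n))) := by
  set ω : ℝ := (volume (ball (0:EuclideanSpace ℝ (Fin n)) 1)).toReal with hω
  have hω0 : 0 ≤ ω := ENNReal.toReal_nonneg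
  refine ⟨ω + 1, by linarith, ?_⟩
  intro k hk f hf0 hf1 hftop hfki
  have hknn : (0:ℝ) < (n:ℝ) := by exact_mod_cast hn
  have hkn : (0:ℝ) < k + n := by positivity
  set M : ℝ := (eLpNorm f ⊤ volume).toReal with hM
  have hM0 : 0 ≤ M := ENNReal.toReal_nonneg
  set p : ℝ := (k + n) / n with hp
  have hp0 : 0 < p := by positivity
  have hp1 : 1 / p = (n:ℝ) / (k + n) := by rw [hp, one_div_div]
  -- measures
  have hprod : (volume : Measure (EuclideanSpace ℝ (Fin n) × EuclideanSpace ℝ (Fin n)))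
      = (volume : Measure (EuclideanSpace ℝ (Fin n))).prod volume := Measure.volume_eq_prod _ _
  have hfi : Integrable f ((volume : Measure (EuclideanSpace ℝ (Fin n))).prod volume) := by
    rw [← hprod]; exact memLp_one_iff_integrable.mp hf1
  have hfki' : Integrable (fun z : EuclideanSpace ℝ (Fin n) × EuclideanSpace ℝ (Fin n) =>
      ‖z.2‖ ^ k * f z) ((volume : Measure (EuclideanSpace ℝ (Fin n))).prod volume) := by
    rw [← hprod]; exact hfki
  -- essential sup bound
  have hfM : ∀ᵐ z ∂((volume : Measure (EuclideanSpace ℝ (Fin n))).prod volume), f z ≤ M := by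
    rw [← hprod]
    filter_upwards [ae_le_eLpNormEssSup (f := f) (μ := volume)] with z hz
    have htop : eLpNormEssSup f volume ≠ ⊤ := by
      have := hftop.2; rwa [eLpNorm_exponent_top, lt_top_iff_ne_top] at this
    have h1 : ‖f z‖ ≤ M := by
      have := ENNReal.toReal_mono htop hz
      simpa [hM, eLpNorm_exponent_top] using this
    calc f z ≤ |f z| := le_abs_self _
      _ = ‖f z‖ := (Real.norm_eq_abs _).symm
      _ ≤ M := h1
  -- pointwise bound for a.e. x
  set m : EuclideanSpace ℝ (Fin n) → ℝ := fun x => ∫ v, ‖v‖ ^ k * f (x, v) with hmdef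
  have hm0 : ∀ x, 0 ≤ m x := fun x =>
    integral_nonneg fun v => mul_nonneg (rpow_nonneg (norm_nonneg _) _) (hf0 _)
  have hρ0 : ∀ x, 0 ≤ ∫ v, f (x, v) := fun x => integral_nonneg fun v => hf0 _
  have hpt : ∀ᵐ x ∂(volume : Measure (EuclideanSpace ℝ (Fin n))),
      ∫ v, f (x, v) ≤ (ω + 1) * M ^ (k/(k+n)) * (m x) ^ ((n:ℝ)/(k+n)) := by
    filter_upwards [hfi.prod_right_ae, hfki'.prod_right_ae, Measure.ae_ae_of_ae_prod hfM]
      with x h1 h2 h3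
    exact stmt7_ptwise n hn k M hk hM0 (fun v => f (x, v)) (fun v => hf0 _) h1 (by simpa using h2) h3
  -- lintegral computation
  have hpe0 : (ENNReal.ofReal p) ≠ 0 := by
    simp [ENNReal.ofReal_eq_zero, not_le, hp0]
  have hpet : (ENNReal.ofReal p) ≠ ⊤ := ENNReal.ofReal_ne_top
  rw [eLpNorm_eq_lintegral_rpow_enorm_toReal hpe0 hpet, ENNReal.toReal_ofReal hp0.le]
  set I : ℝ := ∫ z : EuclideanSpace ℝ (Fin n) × EuclideanSpace ℝ (Fin n), ‖z.2‖ ^ k * f z with hI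
  have hI0 : 0 ≤ I := integral_nonneg fun z => mul_nonneg (rpow_nonneg (norm_nonneg _) _) (hf0 _)
  have hab : (k/(k+(n:ℝ))) * p = k / n := by rw [hp]; field_simp
  have hbb : ((n:ℝ)/(k+n)) * p = 1 := by rw [hp]; field_simp
  -- integrand bound
  have hibnd : ∀ᵐ x ∂(volume : Measure (EuclideanSpace ℝ (Fin n))),
      (‖(∫ v, f (x, v))‖₊ : ℝ≥0∞) ^ p ≤
        ENNReal.ofReal ((ω+1) ^ p * M ^ (k/(n:ℝ)) * m x) := by
    filter_upwards [hpt] with x hx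
    have h1 : (‖(∫ v, f (x, v))‖₊ : ℝ≥0∞) = ENNReal.ofReal (∫ v, f (x, v)) :=
      (Real.enorm_eq_ofReal (hρ0 x))
    rw [h1, ENNReal.ofReal_rpow_of_nonneg (hρ0 x) hp0.le]
    apply ENNReal.ofReal_le_ofReal
    calc (∫ v, f (x, v)) ^ p ≤ ((ω + 1) * M ^ (k/(k+n)) * (m x) ^ ((n:ℝ)/(k+n))) ^ p :=
        Real.rpow_le_rpow (hρ0 x) hx hp0.le
      _ = (ω+1) ^ p * M ^ (k/(n:ℝ)) * m x := by
          rw [Real.mul_rpow (by positivity) (rpow_nonneg (hm0 x) _),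
            Real.mul_rpow (by linarith : (0:ℝ) ≤ ω + 1) (rpow_nonneg hM0 _),
            ← Real.rpow_mul hM0, ← Real.rpow_mul (hm0 x), hab, hbb, Real.rpow_one]
  have hlint : ∫⁻ x, (‖(∫ v, f (x, v))‖₊ : ℝ≥0∞) ^ p ∂volume
      ≤ ENNReal.ofReal ((ω+1) ^ p * M ^ (k/(n:ℝ))) * ENNReal.ofReal I := by
    calc ∫⁻ x, (‖(∫ v, f (x, v))‖₊ : ℝ≥0∞) ^ p ∂volume
        ≤ ∫⁻ x, ENNReal.ofReal ((ω+1) ^ p * M ^ (k/(n:ℝ)) * m x) ∂volume :=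
          lintegral_mono_ae hibnd
      _ = ∫⁻ x, ENNReal.ofReal ((ω+1) ^ p * M ^ (k/(n:ℝ))) * ENNReal.ofReal (m x) ∂volume := by
          apply lintegral_congr_ae
          filter_upwards with x
          rw [ENNReal.ofReal_mul (by positivity)]
      _ = ENNReal.ofReal ((ω+1) ^ p * M ^ (k/(n:ℝ))) * ∫⁻ x, ENNReal.ofReal (m x) ∂volume :=
          lintegral_const_mul' _ _ ENNReal.ofReal_ne_top
      _ = ENNReal.ofReal ((ω+1) ^ p * M ^ (k/(n:ℝ))) * ENNReal.ofReal I := by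
          congr 1
          rw [hI, hprod, ofReal_integral_eq_lintegral_ofReal hfki'
              (Filter.Eventually.of_forall fun z =>
                mul_nonneg (rpow_nonneg (norm_nonneg _) _) (hf0 _)),
            lintegral_prod _ hfki'.aestronglyMeasurable.aemeasurable.ennreal_ofReal]
          apply lintegral_congr_ae
          filter_upwards [hfki'.prod_right_ae] with x hx
          have := ofReal_integral_eq_lintegral_ofReal (f := fun v => ‖v‖ ^ k * f (x, v))
            (by simpa using hx)
            (Filter.Eventually.of_forall fun v =>
              mul_nonneg (rpow_nonneg (norm_nonneg _) _) (hf0 _))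
          simpa using this
  calc (∫⁻ x, (‖(∫ v, f (x, v))‖₊ : ℝ≥0∞) ^ p ∂volume) ^ (1/p)
      ≤ (ENNReal.ofReal ((ω+1) ^ p * M ^ (k/(n:ℝ))) * ENNReal.ofReal I) ^ (1/p) :=
        ENNReal.rpow_le_rpow hlint (by positivity)
    _ = ENNReal.ofReal ((ω + 1) * M ^ (k / (k + n)) * I ^ ((n:ℝ) / (k + n))) := by
        rw [← ENNReal.ofReal_mul (by positivity),
          ENNReal.ofReal_rpow_of_nonneg (by positivity) (by positivity)]
        congr 1
        rw [Real.mul_rpow (by positivity) hI0,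
          Real.mul_rpow (by positivity) (rpow_nonneg hM0 _),
          ← Real.rpow_mul (by positivity : (0:ℝ) ≤ ω + 1),
          ← Real.rpow_mul hM0, hp1]
        have ea : p * ((n:ℝ)/(k+n)) = 1 := by rw [hp]; field_simp
        have eb : k/(n:ℝ) * ((n:ℝ)/(k+n)) = k/(k+n) := by field_simp
        rw [ea, eb, Real.rpow_one]
end

section
/- Let n ≥ 1 and define f₀ : ℝⁿ×ℝⁿ → ℝ by f₀(x,v) = 1 if |v|² ≤ (ln_-|x|)^{2/n} and f₀(x,v) = 0 otherwise. Then there exists a constant C > 0 such that for every real k ≥ 1, ∫∫_{ℝⁿ×ℝⁿ} |v|^k f₀(x,v) dx dv ≤ (C k)^{k/n}. -/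
open MeasureTheory
open scoped ENNReal


lemma aux_div_rpow_le_exp {t p : ℝ} (ht : 0 ≤ t) (hp : 0 < p) :
    (t / p) ^ p ≤ Real.exp t := by
  rcases eq_or_lt_of_le ht with h | h
  · rw [← h]
    simp [Real.zero_rpow hp.ne', (Real.exp_pos 0).le]
  · have hb : 0 < t / p := div_pos h hp
    rw [Real.rpow_def_of_pos hb, Real.exp_le_exp]
    calc Real.log (t / p) * p ≤ (t / p) * p := by
          have := Real.log_le_sub_one_of_pos hb
          have h1 : Real.log (t/p) ≤ t/p := by linarith
          exact mul_le_mul_of_nonneg_right h1 hp.le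
      _ = t := div_mul_cancel₀ t hp.ne'

lemma aux_sup_bound {n : ℕ} (hn : 1 ≤ n) {m r : ℝ} (hm : 0 < m) (hr : 0 ≤ r) :
    r ^ m * Real.exp (-((n : ℝ) * r ^ n)) ≤ (m / (n : ℝ) ^ 2) ^ (m / n) := by
  have hn0 : (0:ℝ) < (n:ℝ) := by exact_mod_cast hn
  have hp : 0 < m / (n:ℝ) := div_pos hm hn0
  have ht : 0 ≤ (n:ℝ) * r ^ n := by positivity
  have key : ((n:ℝ) * r ^ n / (m / n)) ^ (m / (n:ℝ)) ≤ Real.exp ((n:ℝ) * r ^ n) :=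
    aux_div_rpow_le_exp ht hp
  have hbase : (n:ℝ) * r ^ n / (m / n) = ((n:ℝ)^2 / m) * r ^ n := by
    field_simp
  rw [hbase] at key
  have hsplit : (((n:ℝ)^2 / m) * r ^ n) ^ (m / (n:ℝ))
      = ((n:ℝ)^2 / m) ^ (m / (n:ℝ)) * r ^ m := by
    rw [Real.mul_rpow (by positivity) (by positivity)]
    congr 1
    rw [← Real.rpow_natCast r n, ← Real.rpow_mul hr]
    congr 1
    field_simp
  rw [hsplit] at key
  -- key : (n²/m)^(m/n) * r^m ≤ exp (n * r^n)
  have h1 : r ^ m ≤ (m / (n:ℝ)^2) ^ (m / n) * Real.exp ((n:ℝ) * r ^ n) := by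
    have hmul : (m / (n:ℝ)^2) ^ (m / (n:ℝ)) * (((n:ℝ)^2 / m) ^ (m / (n:ℝ)) * r ^ m)
        ≤ (m / (n:ℝ)^2) ^ (m / n) * Real.exp ((n:ℝ) * r ^ n) :=
      mul_le_mul_of_nonneg_left key (by positivity)
    calc r ^ m = ((m / (n:ℝ)^2) * ((n:ℝ)^2 / m)) ^ (m / (n:ℝ)) * r ^ m := by
          rw [show (m / (n:ℝ)^2) * ((n:ℝ)^2 / m) = 1 by field_simp, Real.one_rpow, one_mul]
      _ = (m / (n:ℝ)^2) ^ (m / (n:ℝ)) * (((n:ℝ)^2 / m) ^ (m / (n:ℝ)) * r ^ m) := by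
          rw [Real.mul_rpow (by positivity) (by positivity)]; ring
      _ ≤ _ := hmul
  calc r ^ m * Real.exp (-((n:ℝ) * r ^ n))
      ≤ ((m / (n:ℝ)^2) ^ (m / n) * Real.exp ((n:ℝ) * r ^ n)) * Real.exp (-((n:ℝ) * r ^ n)) :=
        mul_le_mul_of_nonneg_right h1 (Real.exp_pos _).le
    _ = (m / (n:ℝ)^2) ^ (m / n) := by
        rw [mul_assoc, ← Real.exp_add]; simp



lemma aux_pointwise {n : ℕ} (hn : 1 ≤ n) {k r : ℝ} (hk : 1 ≤ k) (hr : 0 ≤ r) :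
    r ^ k * Real.exp (-((n : ℝ) * r ^ n)) * (1 + r) ^ (n + 1)
      ≤ 2 ^ (n + 1) * (1 + ((k + n + 1) / (n : ℝ) ^ 2) ^ ((k + n + 1) / n)) := by
  set a : ℝ := max 1 r with ha
  have ha1 : (1:ℝ) ≤ a := le_max_left _ _
  have ha0 : (0:ℝ) ≤ a := by linarith
  have hra : r ≤ a := le_max_right _ _
  set m : ℝ := k + n + 1 with hm
  have hm1 : (1:ℝ) ≤ m := by have : (0:ℝ) ≤ (n:ℝ) := Nat.cast_nonneg n; simp [hm]; linarith
  have h2 : (1 + r) ^ (n + 1) ≤ 2 ^ (n + 1) * a ^ (n + 1) := by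
    rw [← mul_pow]
    exact pow_le_pow_left₀ (by linarith) (by rw [ha]; have := le_max_left (2*(1:ℝ)) (2*r); have := le_max_right (2*(1:ℝ)) (2*r); nlinarith [le_max_left (1:ℝ) r, le_max_right (1:ℝ) r]) _
  have h3 : r ^ k ≤ a ^ k := Real.rpow_le_rpow hr hra (by linarith)
  have hexp : Real.exp (-((n : ℝ) * r ^ n)) ≤ 1 := by
    rw [Real.exp_le_one_iff]
    have : (0:ℝ) ≤ (n:ℝ) * r ^ n := by positivity
    linarith
  have hexp0 : (0:ℝ) < Real.exp (-((n : ℝ) * r ^ n)) := Real.exp_pos _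
  have key : a ^ k * a ^ ((n:ℕ) + 1 : ℕ) * Real.exp (-((n : ℝ) * r ^ n))
      ≤ 1 + (m / (n : ℝ) ^ 2) ^ (m / n) := by
    have haa : a ^ k * a ^ ((n:ℕ) + 1 : ℕ) = a ^ m := by
      rw [← Real.rpow_natCast a (n + 1), ← Real.rpow_add (by linarith)]
      congr 1
      push_cast; ring
    rw [haa]
    rcases le_total r 1 with h | h
    · have : a = 1 := by simp [ha, h]
      rw [this, Real.one_rpow, one_mul]
      have : (0:ℝ) ≤ (m / (n : ℝ) ^ 2) ^ (m / n) := by positivity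
      linarith
    · have : a = r := by simp [ha, h]
      rw [this]
      have := aux_sup_bound hn (show (0:ℝ) < m by linarith) hr
      linarith
  calc r ^ k * Real.exp (-((n : ℝ) * r ^ n)) * (1 + r) ^ (n + 1)
      ≤ a ^ k * Real.exp (-((n : ℝ) * r ^ n)) * (2 ^ (n + 1) * a ^ (n + 1)) := by
        apply mul_le_mul _ h2 (by positivity) (by positivity)
        exact mul_le_mul_of_nonneg_right h3 hexp0.le
    _ = 2 ^ (n + 1) * (a ^ k * a ^ (n + 1) * Real.exp (-((n : ℝ) * r ^ n))) := by ring
    _ ≤ 2 ^ (n + 1) * (1 + (m / (n : ℝ) ^ 2) ^ (m / n)) := by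
        exact mul_le_mul_of_nonneg_left key (by positivity)


lemma aux_final {n : ℕ} (hn : 1 ≤ n) {k J W : ℝ} (hk : 1 ≤ k) (hJ : 0 ≤ J) (hW : 0 ≤ W) :
    2 ^ (n + 1) * (1 + ((k + n + 1) / (n : ℝ) ^ 2) ^ ((k + n + 1) / n)) * J * W
      ≤ ((max 1 (2 ^ (n + 2) * ((n : ℝ) + 2) ^ 2 * J * W)) ^ n
          * (((n : ℝ) + 2) * Real.exp (2 * n)) * k) ^ (k / n) := by
  have hn1 : (1:ℝ) ≤ (n:ℝ) := by exact_mod_cast hn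
  have hn0 : (0:ℝ) < (n:ℝ) := by linarith
  set m : ℝ := k + n + 1 with hmdef
  have hm1 : (1:ℝ) ≤ m := by simp [hmdef]; linarith
  have hm0 : (0:ℝ) < m := by linarith
  have hm2 : m ≤ ((n:ℝ) + 2) * k := by simp [hmdef]; nlinarith
  set D : ℝ := 2 ^ (n + 2) * ((n : ℝ) + 2) ^ 2 * J * W with hDdef
  set M : ℝ := max 1 D with hMdef
  have hM1 : (1:ℝ) ≤ M := le_max_left _ _
  have hM0 : (0:ℝ) ≤ M := by linarith
  have hDM : D ≤ M ^ k := by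
    calc D ≤ M := le_max_right _ _
      _ = M ^ (1:ℝ) := (Real.rpow_one M).symm
      _ ≤ M ^ k := Real.rpow_le_rpow_of_exponent_le hM1 hk
  -- step 1
  have step1 : 1 + (m / (n:ℝ) ^ 2) ^ (m / n) ≤ 2 * m ^ (m / (n:ℝ)) := by
    have h1 : (m / (n:ℝ) ^ 2) ^ (m / (n:ℝ)) ≤ m ^ (m / (n:ℝ)) := by
      apply Real.rpow_le_rpow (by positivity) _ (by positivity)
      exact div_le_self hm0.le (by nlinarith)
    have h2 : (1:ℝ) ≤ m ^ (m / (n:ℝ)) := Real.one_le_rpow hm1 (by positivity)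
    linarith
  -- step 2
  have step2 : m ^ (m / (n:ℝ)) = m ^ (k / (n:ℝ)) * m ^ (((n:ℝ) + 1) / n) := by
    rw [← Real.rpow_add hm0]
    congr 1
    rw [← add_div]
    ring
  -- step 3
  have step3 : m ^ (k / (n:ℝ)) ≤ (((n:ℝ) + 2) * k) ^ (k / (n:ℝ)) :=
    Real.rpow_le_rpow hm0.le hm2 (by positivity)
  -- step 4
  have step4 : m ^ (((n:ℝ) + 1) / (n:ℝ)) ≤ ((n:ℝ) + 2) ^ 2 * Real.exp (2 * k) := by
    have h1 : m ^ (((n:ℝ) + 1) / (n:ℝ)) ≤ m ^ (2:ℝ) := by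
      apply Real.rpow_le_rpow_of_exponent_le hm1
      rw [div_le_iff₀ hn0]; linarith
    have h2 : m ^ (2:ℝ) = m ^ (2:ℕ) := by
      exact_mod_cast Real.rpow_natCast m 2
    have h3 : m ^ (2:ℕ) ≤ (((n:ℝ) + 2) * k) ^ (2:ℕ) := by
      apply pow_le_pow_left₀ hm0.le hm2
    have hke : k ≤ Real.exp k := by
      have := Real.add_one_le_exp k; linarith
    have h4 : (((n:ℝ) + 2) * k) ^ (2:ℕ) ≤ ((n:ℝ) + 2) ^ 2 * Real.exp (2 * k) := by
      have hk2 : k ^ 2 ≤ Real.exp (2 * k) := by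
        have : k * k ≤ Real.exp k * Real.exp k :=
          mul_le_mul hke hke (by linarith) (Real.exp_pos k).le
        rw [← Real.exp_add] at this
        calc k ^ 2 = k * k := sq k
          _ ≤ Real.exp (k + k) := this
          _ = Real.exp (2 * k) := by ring_nf
      calc (((n:ℝ) + 2) * k) ^ (2:ℕ) = ((n:ℝ) + 2) ^ 2 * k ^ 2 := mul_pow _ _ _
        _ ≤ ((n:ℝ) + 2) ^ 2 * Real.exp (2 * k) :=
            mul_le_mul_of_nonneg_left hk2 (by positivity)
    calc m ^ (((n:ℝ) + 1) / (n:ℝ)) ≤ m ^ (2:ℝ) := h1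
      _ = m ^ (2:ℕ) := h2
      _ ≤ (((n:ℝ) + 2) * k) ^ (2:ℕ) := h3
      _ ≤ _ := h4
  -- identities for the RHS
  have e1 : ((M ^ n : ℝ)) ^ (k / (n:ℝ)) = M ^ k := by
    rw [← Real.rpow_natCast M n, ← Real.rpow_mul hM0]
    congr 1
    field_simp
  have e2 : (Real.exp (2 * (n:ℝ))) ^ (k / (n:ℝ)) = Real.exp (2 * k) := by
    rw [← Real.exp_mul]
    congr 1
    field_simp
  have eR : (M ^ n * (((n : ℝ) + 2) * Real.exp (2 * n)) * k) ^ (k / (n:ℝ))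
      = M ^ k * ((((n:ℝ) + 2) * k) ^ (k / (n:ℝ)) * Real.exp (2 * k)) := by
    rw [Real.mul_rpow (by positivity) (by linarith),
        Real.mul_rpow (by positivity) (by positivity),
        Real.mul_rpow (by positivity) (by positivity), e1, e2,
        Real.mul_rpow (by positivity) (by linarith)]
    ring
  rw [eR]
  have hnn : (0:ℝ) ≤ (((n:ℝ) + 2) * k) ^ (k / (n:ℝ)) * Real.exp (2 * k) := by positivity
  calc 2 ^ (n + 1) * (1 + (m / (n:ℝ) ^ 2) ^ (m / n)) * J * W
      ≤ 2 ^ (n + 1) * (2 * m ^ (m / (n:ℝ))) * J * W := by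
        apply mul_le_mul_of_nonneg_right (mul_le_mul_of_nonneg_right
          (mul_le_mul_of_nonneg_left step1 (by positivity)) hJ) hW
    _ = 2 ^ (n + 2) * J * W * (m ^ (k / (n:ℝ)) * m ^ (((n:ℝ) + 1) / n)) := by
        rw [← step2, pow_succ]
        ring
    _ ≤ 2 ^ (n + 2) * J * W * ((((n:ℝ) + 2) * k) ^ (k / (n:ℝ))
          * (((n:ℝ) + 2) ^ 2 * Real.exp (2 * k))) := by
        apply mul_le_mul_of_nonneg_left _ (by positivity)
        exact mul_le_mul step3 step4 (by positivity) (by positivity)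
    _ = D * ((((n:ℝ) + 2) * k) ^ (k / (n:ℝ)) * Real.exp (2 * k)) := by
        rw [hDdef]; ring
    _ ≤ M ^ k * ((((n:ℝ) + 2) * k) ^ (k / (n:ℝ)) * Real.exp (2 * k)) :=
        mul_le_mul_of_nonneg_right hDM hnn





/-- For `f₀(x,v) = 1_{|v|² ≤ (ln_-|x|)^{2/n}}` there is `C > 0` such that for
every real `k ≥ 1`, `∫∫ |v|^k f₀(x,v) dx dv ≤ (C k)^{k/n}` (the moment being finite). -/
theorem stmt11 (n : ℕ) (hn : 1 ≤ n)
    (f₀ : EuclideanSpace ℝ (Fin n) × EuclideanSpace ℝ (Fin n) → ℝ)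
    (hf₀ : ∀ x v : EuclideanSpace ℝ (Fin n),
      f₀ (x, v) = if ‖v‖ ^ 2 ≤ (max (-Real.log ‖x‖) 0) ^ ((2 : ℝ) / n) then 1 else 0) :
    ∃ C : ℝ, 0 < C ∧
      ∀ k : ℝ, 1 ≤ k →
        Integrable (fun z : EuclideanSpace ℝ (Fin n) × EuclideanSpace ℝ (Fin n) =>
          ‖z.2‖ ^ k * f₀ z) volume ∧
        (∫ z : EuclideanSpace ℝ (Fin n) × EuclideanSpace ℝ (Fin n), ‖z.2‖ ^ k * f₀ z)
          ≤ (C * k) ^ (k / n) := by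
  classical
  have hn1 : (1:ℝ) ≤ (n:ℝ) := by exact_mod_cast hn
  have hn0 : (0:ℝ) < (n:ℝ) := by linarith
  -- the integrable "Japanese bracket" weight
  have hJint : Integrable
      (fun v : EuclideanSpace ℝ (Fin n) => (1 + ‖v‖) ^ (-((n:ℝ) + 1))) volume := by
    apply integrable_one_add_norm
    rw [finrank_euclideanSpace_fin]
    linarith
  set J : ℝ := ∫ v : EuclideanSpace ℝ (Fin n), (1 + ‖v‖) ^ (-((n:ℝ) + 1)) with hJdef
  have hJ0 : 0 ≤ J := integral_nonneg fun v => by positivity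
  have hJlint : ∫⁻ v : EuclideanSpace ℝ (Fin n),
      ENNReal.ofReal ((1 + ‖v‖) ^ (-((n:ℝ) + 1))) = ENNReal.ofReal J :=
    (ofReal_integral_eq_lintegral_ofReal hJint
      (Filter.Eventually.of_forall fun v => by positivity)).symm
  set ω := volume (Metric.ball (0 : EuclideanSpace ℝ (Fin n)) 1) with hωdef
  have hωfin : ω < ⊤ := measure_ball_lt_top
  set W := ω.toReal with hWdef
  have hW0 : 0 ≤ W := ENNReal.toReal_nonneg
  have hωW : ω = ENNReal.ofReal W := (ENNReal.ofReal_toReal hωfin.ne).symm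
  refine ⟨(max 1 (2 ^ (n + 2) * ((n : ℝ) + 2) ^ 2 * J * W)) ^ n
      * (((n : ℝ) + 2) * Real.exp (2 * n)), ?_, ?_⟩
  · have h1 : (0:ℝ) < max 1 (2 ^ (n + 2) * ((n : ℝ) + 2) ^ 2 * J * W) :=
      lt_of_lt_of_le one_pos (le_max_left _ _)
    have h2 : (0:ℝ) < ((n : ℝ) + 2) * Real.exp (2 * n) := by positivity
    exact mul_pos (pow_pos h1 n) h2
  intro k hk
  have hk0 : (0:ℝ) < k := by linarith
  set F : EuclideanSpace ℝ (Fin n) × EuclideanSpace ℝ (Fin n) → ℝ :=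
    fun z => ‖z.2‖ ^ k * f₀ z with hFdef
  have hf₀' : ∀ z : EuclideanSpace ℝ (Fin n) × EuclideanSpace ℝ (Fin n),
      f₀ z = if ‖z.2‖ ^ 2 ≤ (max (-Real.log ‖z.1‖) 0) ^ ((2 : ℝ) / n) then 1 else 0 :=
    fun z => hf₀ z.1 z.2
  have hF0 : ∀ z, 0 ≤ F z := by
    intro z
    rw [hFdef]
    simp only [hf₀' z]
    split_ifs <;> [positivity; simp]
  -- measurability
  have hknorm : Measurable fun z : EuclideanSpace ℝ (Fin n) × EuclideanSpace ℝ (Fin n) =>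
      ‖z.2‖ ^ k :=
    ((continuous_norm.comp continuous_snd).rpow_const fun z => Or.inr hk0.le).measurable
  have hFm : Measurable F := by
    have hS : MeasurableSet {z : EuclideanSpace ℝ (Fin n) × EuclideanSpace ℝ (Fin n) |
        ‖z.2‖ ^ 2 ≤ (max (-Real.log ‖z.1‖) 0) ^ ((2 : ℝ) / n)} := by
      apply measurableSet_le
      · exact ((continuous_norm.comp continuous_snd).pow 2).measurable
      · have hmax : Measurable fun z : EuclideanSpace ℝ (Fin n) × EuclideanSpace ℝ (Fin n) =>
            max (-Real.log ‖z.1‖) 0 :=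
          ((Real.measurable_log.comp (continuous_norm.comp continuous_fst).measurable).neg).max
            measurable_const
        exact (Real.continuous_rpow_const (by positivity)).measurable.comp hmax
    have : F = fun z => ‖z.2‖ ^ k *
        (if ‖z.2‖ ^ 2 ≤ (max (-Real.log ‖z.1‖) 0) ^ ((2 : ℝ) / n) then 1 else 0) := by
      funext z; rw [hFdef]; simp only [hf₀' z]
    rw [this]
    exact hknorm.mul (Measurable.ite hS measurable_const measurable_const)
  -- the dominating function on the product space
  set g : EuclideanSpace ℝ (Fin n) × EuclideanSpace ℝ (Fin n) → ℝ≥0∞ :=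
    fun z => ENNReal.ofReal (‖z.2‖ ^ k) *
      (if ‖z.1‖ ≤ Real.exp (-(‖z.2‖ ^ n)) then 1 else 0) with hgdef
  have hgm : Measurable g := by
    apply (ENNReal.measurable_ofReal.comp hknorm).mul
    apply Measurable.ite _ measurable_const measurable_const
    apply measurableSet_le (continuous_norm.comp continuous_fst).measurable
    exact (((continuous_norm.comp continuous_snd).pow n).neg).rexp.measurable
  have hFg : ∀ z, ENNReal.ofReal (F z) ≤ g z := by
    intro z
    rw [hFdef]
    simp only [hf₀' z]
    by_cases h : ‖z.2‖ ^ 2 ≤ (max (-Real.log ‖z.1‖) 0) ^ ((2 : ℝ) / n)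
    · rw [if_pos h, mul_one]
      by_cases hv : z.2 = 0
      · rw [hv]
        simp [Real.zero_rpow hk0.ne']
      · have hvn : 0 < ‖z.2‖ := norm_pos_iff.mpr hv
        set Mx := max (-Real.log ‖z.1‖) 0 with hMxdef
        have hMx0 : 0 ≤ Mx := le_max_right _ _
        have h2 : ‖z.2‖ ≤ Mx ^ ((1:ℝ)/n) := by
          have he : Mx ^ ((2:ℝ)/n) = (Mx ^ ((1:ℝ)/n)) ^ 2 := by
            rw [← Real.rpow_natCast (Mx ^ ((1:ℝ)/n)) 2, ← Real.rpow_mul hMx0]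
            congr 1
            push_cast
            ring
          rw [he] at h
          nlinarith [norm_nonneg z.2, Real.rpow_nonneg hMx0 ((1:ℝ)/n)]
        have h3 : ‖z.2‖ ^ n ≤ Mx := by
          calc ‖z.2‖ ^ n ≤ (Mx ^ ((1:ℝ)/n)) ^ n := pow_le_pow_left₀ (norm_nonneg _) h2 n
            _ = Mx := by
                rw [← Real.rpow_natCast (Mx ^ ((1:ℝ)/n)) n, ← Real.rpow_mul hMx0]
                rw [show (1:ℝ)/n * n = 1 by field_simp, Real.rpow_one]
        have h4 : 0 < ‖z.2‖ ^ n := pow_pos hvn n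
        have h5 : 0 < Mx := lt_of_lt_of_le h4 h3
        have ha : 0 < -Real.log ‖z.1‖ := by
          rcases le_or_gt (-Real.log ‖z.1‖) 0 with hc | hc
          · rw [hMxdef, max_eq_right hc] at h5; exact absurd h5 (lt_irrefl 0)
          · exact hc
        have hMeq : Mx = -Real.log ‖z.1‖ := by rw [hMxdef, max_eq_left ha.le]
        have hx0 : ‖z.1‖ ≠ 0 := by
          intro h0
          rw [h0, Real.log_zero, neg_zero] at ha
          exact absurd ha (lt_irrefl 0)
        have hxpos : 0 < ‖z.1‖ := lt_of_le_of_ne (norm_nonneg _) (Ne.symm hx0)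
        have hcond : ‖z.1‖ ≤ Real.exp (-(‖z.2‖ ^ n)) := by
          rw [← Real.exp_log hxpos]
          apply Real.exp_le_exp.mpr
          rw [hMeq] at h3
          linarith
        rw [hgdef]
        simp only [if_pos hcond, mul_one]
        exact le_refl _
    · rw [if_neg h, mul_zero, ENNReal.ofReal_zero]
      exact zero_le
  -- constants
  set A : ℝ := 2 ^ (n + 1) * (1 + ((k + n + 1) / (n : ℝ) ^ 2) ^ ((k + n + 1) / n)) with hAdef
  have hA0 : 0 ≤ A := by positivity
  -- pointwise bound in v after integrating out x
  have hpt : ∀ v : EuclideanSpace ℝ (Fin n),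
      ‖v‖ ^ k * Real.exp (-((n:ℝ) * ‖v‖ ^ n)) ≤ A * (1 + ‖v‖) ^ (-((n:ℝ) + 1)) := by
    intro v
    have hP : (0:ℝ) < (1 + ‖v‖) ^ (n + 1) := by positivity
    have hrw : (1 + ‖v‖) ^ (-((n:ℝ) + 1)) = ((1 + ‖v‖) ^ (n + 1 : ℕ))⁻¹ := by
      rw [← Real.rpow_natCast (1 + ‖v‖) (n + 1), ← Real.rpow_neg (by positivity)]
      push_cast
      ring_nf
    rw [hrw, ← div_eq_mul_inv, le_div_iff₀ hP]
    exact aux_pointwise hn hk (norm_nonneg v)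
  -- the main lintegral bound
  have hL : (∫⁻ z : EuclideanSpace ℝ (Fin n) × EuclideanSpace ℝ (Fin n),
      ENNReal.ofReal (F z)) ≤ ENNReal.ofReal (A * J * W) := by
    have hprod : (∫⁻ z : EuclideanSpace ℝ (Fin n) × EuclideanSpace ℝ (Fin n), g z)
        = ∫⁻ v : EuclideanSpace ℝ (Fin n), ∫⁻ x : EuclideanSpace ℝ (Fin n), g (x, v) := by
      rw [Measure.volume_eq_prod]
      exact lintegral_prod_symm g hgm.aemeasurable
    have hinner : ∀ v : EuclideanSpace ℝ (Fin n),
        (∫⁻ x : EuclideanSpace ℝ (Fin n), g (x, v))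
          = ENNReal.ofReal (‖v‖ ^ k * Real.exp (-((n:ℝ) * ‖v‖ ^ n))) * ω := by
      intro v
      have hset : MeasurableSet {x : EuclideanSpace ℝ (Fin n) |
          ‖x‖ ≤ Real.exp (-(‖v‖ ^ n))} := measurableSet_le measurable_norm measurable_const
      calc (∫⁻ x : EuclideanSpace ℝ (Fin n), g (x, v))
          = ∫⁻ x : EuclideanSpace ℝ (Fin n), ENNReal.ofReal (‖v‖ ^ k) *
              Set.indicator {x : EuclideanSpace ℝ (Fin n) | ‖x‖ ≤ Real.exp (-(‖v‖ ^ n))}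
                (1 : EuclideanSpace ℝ (Fin n) → ℝ≥0∞) x :=
            lintegral_congr fun x => by
              simp only [hgdef, Set.indicator_apply, Set.mem_setOf_eq, Pi.one_apply]
        _ = ENNReal.ofReal (‖v‖ ^ k) *
              ∫⁻ x : EuclideanSpace ℝ (Fin n),
                Set.indicator {x : EuclideanSpace ℝ (Fin n) | ‖x‖ ≤ Real.exp (-(‖v‖ ^ n))}
                  (1 : EuclideanSpace ℝ (Fin n) → ℝ≥0∞) x :=
            lintegral_const_mul' _ _ ENNReal.ofReal_ne_top
        _ = ENNReal.ofReal (‖v‖ ^ k) *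
              volume {x : EuclideanSpace ℝ (Fin n) | ‖x‖ ≤ Real.exp (-(‖v‖ ^ n))} := by
            rw [lintegral_indicator_one hset]
        _ = ENNReal.ofReal (‖v‖ ^ k) *
              (ENNReal.ofReal (Real.exp (-(‖v‖ ^ n)) ^ n) * ω) := by
            congr 1
            have hsetball : {x : EuclideanSpace ℝ (Fin n) | ‖x‖ ≤ Real.exp (-(‖v‖ ^ n))}
                = Metric.closedBall 0 (Real.exp (-(‖v‖ ^ n))) := by
              ext x
              simp [mem_closedBall_zero_iff]
            rw [hsetball, Measure.addHaar_closedBall volume 0 (Real.exp_pos _).le,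
              finrank_euclideanSpace_fin, hωdef]
        _ = ENNReal.ofReal (‖v‖ ^ k * Real.exp (-((n:ℝ) * ‖v‖ ^ n))) * ω := by
            rw [← mul_assoc, ← ENNReal.ofReal_mul (by positivity)]
            congr 2
            rw [← Real.exp_nat_mul]
            congr 1
            ring
    have hb : ∀ v : EuclideanSpace ℝ (Fin n),
        ENNReal.ofReal (‖v‖ ^ k * Real.exp (-((n:ℝ) * ‖v‖ ^ n))) * ω
          ≤ (ENNReal.ofReal A * ω) * ENNReal.ofReal ((1 + ‖v‖) ^ (-((n:ℝ) + 1))) := by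
      intro v
      calc ENNReal.ofReal (‖v‖ ^ k * Real.exp (-((n:ℝ) * ‖v‖ ^ n))) * ω
          ≤ ENNReal.ofReal (A * (1 + ‖v‖) ^ (-((n:ℝ) + 1))) * ω :=
            mul_le_mul_left (ENNReal.ofReal_le_ofReal (hpt v)) ω
        _ = (ENNReal.ofReal A * ω) * ENNReal.ofReal ((1 + ‖v‖) ^ (-((n:ℝ) + 1))) := by
            rw [ENNReal.ofReal_mul hA0]
            ring
    calc (∫⁻ z : EuclideanSpace ℝ (Fin n) × EuclideanSpace ℝ (Fin n),
          ENNReal.ofReal (F z))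
        ≤ ∫⁻ z : EuclideanSpace ℝ (Fin n) × EuclideanSpace ℝ (Fin n), g z :=
          lintegral_mono hFg
      _ = ∫⁻ v : EuclideanSpace ℝ (Fin n), ∫⁻ x : EuclideanSpace ℝ (Fin n), g (x, v) := hprod
      _ = ∫⁻ v : EuclideanSpace ℝ (Fin n),
            ENNReal.ofReal (‖v‖ ^ k * Real.exp (-((n:ℝ) * ‖v‖ ^ n))) * ω := by
          simp_rw [hinner]
      _ ≤ ∫⁻ v : EuclideanSpace ℝ (Fin n),
            (ENNReal.ofReal A * ω) * ENNReal.ofReal ((1 + ‖v‖) ^ (-((n:ℝ) + 1))) :=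
          lintegral_mono hb
      _ = (ENNReal.ofReal A * ω) *
            ∫⁻ v : EuclideanSpace ℝ (Fin n), ENNReal.ofReal ((1 + ‖v‖) ^ (-((n:ℝ) + 1))) :=
          lintegral_const_mul' _ _ (ENNReal.mul_ne_top ENNReal.ofReal_ne_top hωfin.ne)
      _ = (ENNReal.ofReal A * ω) * ENNReal.ofReal J := by rw [hJlint]
      _ = ENNReal.ofReal (A * J * W) := by
          rw [hωW, ← ENNReal.ofReal_mul hA0, ← ENNReal.ofReal_mul (mul_nonneg hA0 hW0)]
          congr 1
          ring
  constructor
  · refine ⟨hFm.aestronglyMeasurable, ?_⟩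
    rw [hasFiniteIntegral_iff_norm]
    have : ∀ z : EuclideanSpace ℝ (Fin n) × EuclideanSpace ℝ (Fin n),
        ENNReal.ofReal ‖F z‖ = ENNReal.ofReal (F z) := fun z => by
      rw [Real.norm_of_nonneg (hF0 z)]
    simp_rw [this]
    exact lt_of_le_of_lt hL ENNReal.ofReal_lt_top
  · rw [integral_eq_lintegral_of_nonneg_ae (Filter.Eventually.of_forall hF0)
      hFm.aestronglyMeasurable]
    have h1 := ENNReal.toReal_mono ENNReal.ofReal_ne_top hL
    rw [ENNReal.toReal_ofReal (by positivity)] at h1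
    calc (∫⁻ z : EuclideanSpace ℝ (Fin n) × EuclideanSpace ℝ (Fin n),
          ENNReal.ofReal (F z)).toReal ≤ A * J * W := h1
      _ ≤ _ := by
          rw [hAdef]
          exact aux_final hn hk hJ0 hW0
end

section
/- Let n ≥ 1, ξ ∈ ℝⁿ and C₀ > 0. Let ρ : ℝⁿ → [0,∞) be measurable with ρ ∈ L¹(ℝⁿ) and ρ(x) ≤ C₀ (1 + ln_-|x−ξ|) for almost every x ∈ ℝⁿ. Then sup_{p∈[1,∞)} ‖ρ‖_{L^p(ℝⁿ)}/p < +∞. -/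
open MeasureTheory Metric ENNReal

lemma auxR (a : ℝ≥0∞) (ha : a ≠ ⊤) {s : ℝ} (h0 : 0 ≤ s) (h1 : s ≤ 1) :
    a ^ s ≤ ENNReal.ofReal (max a.toReal 1) := by
  rcases le_total a 1 with h | h
  · calc a ^ s ≤ 1 ^ s := ENNReal.rpow_le_rpow h h0
    _ = 1 := ENNReal.one_rpow s
    _ ≤ _ := by
        rw [← ENNReal.ofReal_one]
        exact ENNReal.ofReal_le_ofReal (le_max_right _ _)
  · calc a ^ s ≤ a ^ (1:ℝ) := ENNReal.rpow_le_rpow_of_exponent_le h h1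
    _ = a := ENNReal.rpow_one a
    _ ≤ _ := by
        conv_lhs => rw [← ENNReal.ofReal_toReal ha]
        exact ENNReal.ofReal_le_ofReal (le_max_left _ _)

lemma auxM (n : ℕ) (hn : 1 ≤ n) (ξ : EuclideanSpace ℝ (Fin n)) :
    ∫⁻ x in ball ξ 1, ENNReal.ofReal (‖x - ξ‖ ^ (-(n:ℝ)/2)) ∂volume < ⊤ := by
  haveI : Nontrivial (EuclideanSpace ℝ (Fin n)) :=
    Module.nontrivial_of_finrank_pos (R := ℝ) (by rw [finrank_euclideanSpace_fin]; omega)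
  set g : EuclideanSpace ℝ (Fin n) → ℝ≥0∞ :=
    fun x => ENNReal.ofReal (‖x - ξ‖ ^ (-(n:ℝ)/2)) with hg
  set A : ℕ → Set (EuclideanSpace ℝ (Fin n)) :=
    fun k => ball ξ ((1/2:ℝ)^k) \ ball ξ ((1/2:ℝ)^(k+1)) with hA
  have hexp : -(n:ℝ)/2 ≤ 0 := by
    have : (0:ℝ) ≤ n := Nat.cast_nonneg n
    linarith
  have hcover : ball ξ 1 ⊆ {ξ} ∪ ⋃ k, A k := by
    intro x hx
    rcases eq_or_ne x ξ with h | h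
    · exact Or.inl h
    · refine Or.inr ?_
      have hr0 : 0 < dist x ξ := dist_pos.mpr h
      have hex : ∃ k, (1/2:ℝ)^(k+1) ≤ dist x ξ := by
        obtain ⟨m, hm⟩ := exists_pow_lt_of_lt_one hr0 (by norm_num : (1/2:ℝ) < 1)
        exact ⟨m, le_of_lt (lt_of_le_of_lt (pow_le_pow_of_le_one (by norm_num)
          (by norm_num) (Nat.le_succ m)) hm)⟩
      classical
      refine Set.mem_iUnion.mpr ⟨Nat.find hex, ?_,
        fun hmem => absurd (Nat.find_spec hex) (not_le.mpr hmem)⟩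
      rcases Nat.eq_zero_or_pos (Nat.find hex) with h0 | h0
      · rw [mem_ball, h0, pow_zero]
        simpa [mem_ball] using hx
      · have hmin := Nat.find_min hex (m := Nat.find hex - 1) (by omega)
        have hlt : dist x ξ < (1/2:ℝ)^(Nat.find hex - 1 + 1) := not_le.mp hmin
        rw [Nat.sub_add_cancel h0] at hlt
        exact mem_ball.mpr hlt
  have hsum : ∫⁻ x in ball ξ 1, g x ∂volume ≤ ∑' k, ∫⁻ x in A k, g x ∂volume := by
    calc ∫⁻ x in ball ξ 1, g x ∂volume
        ≤ ∫⁻ x in {ξ} ∪ ⋃ k, A k, g x ∂volume := lintegral_mono_set hcover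
      _ ≤ ∫⁻ x in {ξ}, g x ∂volume + ∫⁻ x in ⋃ k, A k, g x ∂volume := lintegral_union_le _ _ _
      _ = ∫⁻ x in ⋃ k, A k, g x ∂volume := by
          rw [setLIntegral_measure_zero _ _ (measure_singleton ξ), zero_add]
      _ ≤ _ := lintegral_iUnion_le _ _
  set v₁ : ℝ≥0∞ := volume (ball (0:EuclideanSpace ℝ (Fin n)) 1) with hv₁
  set q : ℝ≥0∞ := ENNReal.ofReal ((1/2:ℝ)^((n:ℝ)/2)) with hq
  set c : ℝ≥0∞ := ENNReal.ofReal ((1/2:ℝ)^(-(n:ℝ)/2)) with hc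
  have hterm : ∀ k, ∫⁻ x in A k, g x ∂volume ≤ (c * v₁) * q ^ k := by
    intro k
    have hb : ∀ x ∈ A k, g x ≤ ENNReal.ofReal (((1/2:ℝ)^(k+1)) ^ (-(n:ℝ)/2)) := by
      intro x hx
      have h1 : (1/2:ℝ)^(k+1) ≤ ‖x - ξ‖ := by
        have h2 := hx.2
        rw [mem_ball, dist_eq_norm] at h2
        exact not_lt.mp h2
      exact ENNReal.ofReal_le_ofReal
        (Real.rpow_le_rpow_of_nonpos (by positivity) h1 hexp)
    have key : ((1/2:ℝ)^(k+1)) ^ (-(n:ℝ)/2) * ((1/2:ℝ)^k)^n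
        = (1/2:ℝ)^(-(n:ℝ)/2) * ((1/2:ℝ)^((n:ℝ)/2))^k := by
      rw [← Real.rpow_natCast (1/2:ℝ) (k+1), ← Real.rpow_natCast ((1/2:ℝ)^k) n,
        ← Real.rpow_natCast (1/2:ℝ) k, ← Real.rpow_natCast ((1/2:ℝ)^((n:ℝ)/2)) k,
        ← Real.rpow_mul (by norm_num : (0:ℝ) ≤ 1/2),
        ← Real.rpow_mul (by norm_num : (0:ℝ) ≤ 1/2),
        ← Real.rpow_mul (by norm_num : (0:ℝ) ≤ 1/2),
        ← Real.rpow_add (by norm_num : (0:ℝ) < 1/2),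
        ← Real.rpow_add (by norm_num : (0:ℝ) < 1/2)]
      congr 1
      push_cast
      ring
    calc ∫⁻ x in A k, g x ∂volume
        ≤ ∫⁻ _ in A k, ENNReal.ofReal (((1/2:ℝ)^(k+1)) ^ (-(n:ℝ)/2)) ∂volume :=
          setLIntegral_mono_ae aemeasurable_const (Filter.Eventually.of_forall hb)
      _ = ENNReal.ofReal (((1/2:ℝ)^(k+1)) ^ (-(n:ℝ)/2)) * volume (A k) := setLIntegral_const _ _
      _ ≤ ENNReal.ofReal (((1/2:ℝ)^(k+1)) ^ (-(n:ℝ)/2)) * volume (ball ξ ((1/2:ℝ)^k)) :=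
          mul_le_mul_right (measure_mono Set.diff_subset) _
      _ = (c * v₁) * q ^ k := by
          rw [Measure.addHaar_ball_of_pos _ _ (by positivity : (0:ℝ) < (1/2:ℝ)^k),
            finrank_euclideanSpace_fin, ← mul_assoc,
            ← ENNReal.ofReal_mul (by positivity), key,
            ENNReal.ofReal_mul (by positivity), hc, hq,
            ENNReal.ofReal_pow (by positivity)]
          ring
  have hq1 : q < 1 := by
    rw [hq, ← ENNReal.ofReal_one]
    apply ENNReal.ofReal_lt_ofReal_iff_of_nonneg (by positivity) |>.mpr
    exact Real.rpow_lt_one (by norm_num) (by norm_num) (by positivity)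
  calc ∫⁻ x in ball ξ 1, g x ∂volume ≤ ∑' k, ∫⁻ x in A k, g x ∂volume := hsum
    _ ≤ ∑' k, (c * v₁) * q ^ k := ENNReal.tsum_le_tsum hterm
    _ = (c * v₁) * (1 - q)⁻¹ := by rw [ENNReal.tsum_mul_left, ENNReal.tsum_geometric]
    _ < ⊤ := by
        apply ENNReal.mul_lt_top
        · exact ENNReal.mul_lt_top ENNReal.ofReal_lt_top measure_ball_lt_top
        · rw [ENNReal.inv_lt_top]
          exact tsub_pos_of_lt hq1

/-- A nonnegative integrable density with at most a logarithmic singularity at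
one point `ξ`, i.e. `ρ(x) ≤ C₀ (1 + ln_-|x-ξ|)` a.e., satisfies the linear-in-`p` growth
condition `sup_{p ≥ 1} ‖ρ‖_{L^p}/p < ∞`. -/
theorem stmt14 (n : ℕ) (hn : 1 ≤ n) (ξ : EuclideanSpace ℝ (Fin n)) (C₀ : ℝ) (hC₀ : 0 < C₀)
    (ρ : EuclideanSpace ℝ (Fin n) → ℝ) (hmeas : Measurable ρ) (hnonneg : ∀ x, 0 ≤ ρ x)
    (hL1 : Integrable ρ volume)
    (hbound : ∀ᵐ x : EuclideanSpace ℝ (Fin n) ∂volume,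
      ρ x ≤ C₀ * (1 + max (-Real.log ‖x - ξ‖) 0)) :
    ∃ C : ℝ, ∀ p : ℝ, 1 ≤ p →
      eLpNorm ρ (ENNReal.ofReal p) volume ≤ ENNReal.ofReal (C * p) := by
  haveI : Nontrivial (EuclideanSpace ℝ (Fin n)) :=
    Module.nontrivial_of_finrank_pos (R := ℝ) (by rw [finrank_euclideanSpace_fin]; omega)
  set M : ℝ≥0∞ := ∫⁻ x in ball ξ 1, ENNReal.ofReal (‖x - ξ‖ ^ (-(n:ℝ)/2)) ∂volume with hMdef
  have hMlt : M < ⊤ := auxM n hn ξ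
  set I : ℝ≥0∞ := ∫⁻ x, ENNReal.ofReal (ρ x) ∂volume with hIdef
  have hIlt : I < ⊤ := hL1.lintegral_lt_top
  refine ⟨3*C₀*max M.toReal 1 + max C₀ 1 * max I.toReal 1, fun p hp => ?_⟩
  have hp0 : 0 < p := lt_of_lt_of_le one_pos hp
  have hP0 : (ENNReal.ofReal p) ≠ 0 := by
    simp only [ne_eq, ENNReal.ofReal_eq_zero, not_le]; exact hp0
  have h1p : 1/p ≤ 1 := by rw [div_le_one hp0]; exact hp
  have h1p0 : 0 ≤ 1/p := by positivity
  rw [eLpNorm_eq_lintegral_rpow_enorm_toReal hP0 ENNReal.ofReal_ne_top,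
    ENNReal.toReal_ofReal hp0.le]
  have hrew : (∫⁻ x, ‖ρ x‖ₑ ^ p ∂volume)
      = ∫⁻ x, ENNReal.ofReal (ρ x) ^ p ∂volume :=
    lintegral_congr fun x => by rw [Real.enorm_eq_ofReal (hnonneg x)]
  rw [hrew]
  have hne : ∀ᵐ x : EuclideanSpace ℝ (Fin n) ∂volume, x ≠ ξ := by
    rw [ae_iff]
    simp only [ne_eq, not_not, Set.setOf_eq_eq_singleton]
    exact measure_singleton ξ
  set K : ℝ≥0∞ := ENNReal.ofReal (C₀*(1+2*p)) with hK
  have hnpos : (0:ℝ) < n := by exact_mod_cast Nat.pos_of_ne_zero (by omega)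
  -- inside bound
  have hgm : Measurable fun x : EuclideanSpace ℝ (Fin n) =>
      ENNReal.ofReal (‖x - ξ‖ ^ (-(n:ℝ)/2)) :=
    (((measurable_id.sub measurable_const).norm).pow measurable_const).ennreal_ofReal
  have hptw : ∀ᵐ x ∂(volume : Measure (EuclideanSpace ℝ (Fin n))), x ∈ ball ξ 1 →
      ENNReal.ofReal (ρ x) ^ p ≤ K^p * ENNReal.ofReal (‖x - ξ‖ ^ (-(n:ℝ)/2)) := by
    filter_upwards [hbound, hne] with x hx hxne hxB
    have hr0 : 0 < ‖x - ξ‖ := norm_pos_iff.mpr (sub_ne_zero.mpr hxne)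
    have hr1 : ‖x - ξ‖ < 1 := by rwa [mem_ball, dist_eq_norm] at hxB
    set r := ‖x - ξ‖ with hrdef
    set ε := (n:ℝ)/(2*p) with hεdef
    have hε : 0 < ε := by positivity
    have hrp : 0 < r ^ (-ε) := Real.rpow_pos_of_pos hr0 _
    have hlog : -Real.log r ≤ ε⁻¹ * r ^ (-ε) := by
      have h1 : Real.log (r ^ (-ε)) = -ε * Real.log r := Real.log_rpow hr0 _
      have h2 : Real.log (r ^ (-ε)) ≤ r ^ (-ε) - 1 := Real.log_le_sub_one_of_pos hrp
      rw [h1] at h2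
      have h3 : -ε * Real.log r ≤ r ^ (-ε) := by linarith
      have h4 : ε⁻¹ * (-ε * Real.log r) ≤ ε⁻¹ * r ^ (-ε) :=
        mul_le_mul_of_nonneg_left h3 (le_of_lt (inv_pos.mpr hε))
      calc -Real.log r = ε⁻¹ * (-ε * Real.log r) := by
            field_simp
        _ ≤ _ := h4
    have h1r : 1 ≤ r ^ (-ε) :=
      Real.one_le_rpow_of_pos_of_le_one_of_nonpos hr0 hr1.le (by linarith)
    have hεinv : ε⁻¹ ≤ 2*p := by
      rw [hεdef, inv_div]
      exact div_le_self (by positivity) (by exact_mod_cast hn)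
    have hstep : ρ x ≤ (C₀*(1+2*p)) * r ^ (-ε) := by
      have hmax : max (-Real.log r) 0 ≤ ε⁻¹ * r ^ (-ε) := max_le hlog (by positivity)
      have h5 : ε⁻¹ * r^(-ε) ≤ 2*p*r^(-ε) := mul_le_mul_of_nonneg_right hεinv hrp.le
      have hA : 1 + max (-Real.log r) 0 ≤ (1+2*p) * r^(-ε) := by nlinarith
      calc ρ x ≤ C₀*(1 + max (-Real.log r) 0) := hx
        _ ≤ C₀*((1+2*p)*r^(-ε)) := mul_le_mul_of_nonneg_left hA hC₀.le
        _ = (C₀*(1+2*p))*r^(-ε) := by ring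
    have hofr : ENNReal.ofReal (ρ x) ≤ K * ENNReal.ofReal (r ^ (-ε)) := by
      rw [hK, ← ENNReal.ofReal_mul (by positivity)]
      exact ENNReal.ofReal_le_ofReal hstep
    calc ENNReal.ofReal (ρ x) ^ p ≤ (K * ENNReal.ofReal (r ^ (-ε)))^p :=
          ENNReal.rpow_le_rpow hofr hp0.le
      _ = K^p * (ENNReal.ofReal (r^(-ε)))^p := ENNReal.mul_rpow_of_nonneg _ _ hp0.le
      _ = K^p * ENNReal.ofReal (r ^ (-(n:ℝ)/2)) := by
          have hexpeq : -ε * p = -(n:ℝ)/2 := by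
            rw [hεdef]
            field_simp
          rw [ENNReal.ofReal_rpow_of_pos hrp, ← Real.rpow_mul hr0.le, hexpeq]
  have hin : ∫⁻ x in ball ξ 1, ENNReal.ofReal (ρ x) ^ p ∂volume ≤ K ^ p * M := by
    calc ∫⁻ x in ball ξ 1, ENNReal.ofReal (ρ x) ^ p ∂volume
        ≤ ∫⁻ x in ball ξ 1, K^p * ENNReal.ofReal (‖x - ξ‖ ^ (-(n:ℝ)/2)) ∂volume :=
          setLIntegral_mono_ae ((hgm.const_mul _).aemeasurable) hptw
      _ = K ^ p * M := lintegral_const_mul' _ _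
          (ENNReal.rpow_ne_top_of_nonneg hp0.le ENNReal.ofReal_ne_top)
  -- outside bound
  have houtptw : ∀ᵐ x ∂(volume : Measure (EuclideanSpace ℝ (Fin n))), x ∈ (ball ξ 1)ᶜ →
      ENNReal.ofReal (ρ x) ^ p ≤ (ENNReal.ofReal C₀)^(p-1) * ENNReal.ofReal (ρ x) := by
    filter_upwards [hbound] with x hx hxB
    have hr1 : 1 ≤ ‖x - ξ‖ := by
      rw [Set.mem_compl_iff, mem_ball, dist_eq_norm, not_lt] at hxB
      exact hxB
    have hmax0 : max (-Real.log ‖x-ξ‖) 0 = 0 :=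
      max_eq_right (neg_nonpos.mpr (Real.log_nonneg hr1))
    have hρC : ρ x ≤ C₀ := by rw [hmax0] at hx; linarith
    rcases eq_or_lt_of_le (hnonneg x) with h0 | h0
    · rw [← h0]
      simp [ENNReal.zero_rpow_of_pos hp0]
    · have hne0 : ENNReal.ofReal (ρ x) ≠ 0 := by
        simp only [ne_eq, ENNReal.ofReal_eq_zero, not_le]; exact h0
      have hsplit : ENNReal.ofReal (ρ x) ^ p
          = ENNReal.ofReal (ρ x) ^ (p-1) * ENNReal.ofReal (ρ x) := by
        conv_lhs => rw [show p = (p-1)+1 by ring]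
        rw [ENNReal.rpow_add _ _ hne0 ENNReal.ofReal_ne_top, ENNReal.rpow_one]
      rw [hsplit]
      exact mul_le_mul'
        (ENNReal.rpow_le_rpow (ENNReal.ofReal_le_ofReal hρC) (by linarith)) le_rfl
  have hout : ∫⁻ x in (ball ξ 1)ᶜ, ENNReal.ofReal (ρ x) ^ p ∂volume
      ≤ (ENNReal.ofReal C₀)^(p-1) * I := by
    calc ∫⁻ x in (ball ξ 1)ᶜ, ENNReal.ofReal (ρ x) ^ p ∂volume
        ≤ ∫⁻ x in (ball ξ 1)ᶜ, (ENNReal.ofReal C₀)^(p-1) * ENNReal.ofReal (ρ x) ∂volume :=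
          setLIntegral_mono_ae ((hmeas.ennreal_ofReal.const_mul _).aemeasurable) houtptw
      _ = (ENNReal.ofReal C₀)^(p-1) * ∫⁻ x in (ball ξ 1)ᶜ, ENNReal.ofReal (ρ x) ∂volume :=
          lintegral_const_mul' _ _
            (ENNReal.rpow_ne_top_of_nonneg (by linarith) ENNReal.ofReal_ne_top)
      _ ≤ (ENNReal.ofReal C₀)^(p-1) * I :=
          mul_le_mul_right (setLIntegral_le_lintegral _ _) _
  -- assemble
  calc (∫⁻ x, ENNReal.ofReal (ρ x) ^ p ∂volume) ^ (1/p)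
      = (∫⁻ x in ball ξ 1, ENNReal.ofReal (ρ x) ^ p ∂volume
        + ∫⁻ x in (ball ξ 1)ᶜ, ENNReal.ofReal (ρ x) ^ p ∂volume) ^ (1/p) := by
        rw [lintegral_add_compl _ measurableSet_ball]
    _ ≤ (K^p*M + (ENNReal.ofReal C₀)^(p-1)*I)^(1/p) :=
        ENNReal.rpow_le_rpow (add_le_add hin hout) h1p0
    _ ≤ (K^p*M)^(1/p) + ((ENNReal.ofReal C₀)^(p-1)*I)^(1/p) :=
        ENNReal.rpow_add_le_add_rpow _ _ h1p0 h1p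
    _ ≤ ENNReal.ofReal ((C₀*(1+2*p)) * max M.toReal 1)
        + ENNReal.ofReal (max C₀ 1 * max I.toReal 1) := by
        gcongr ?_ + ?_
        · rw [ENNReal.mul_rpow_of_nonneg _ _ h1p0, ← ENNReal.rpow_mul,
            mul_one_div_cancel hp0.ne', ENNReal.rpow_one,
            ENNReal.ofReal_mul (by positivity)]
          exact mul_le_mul' le_rfl (auxR M hMlt.ne h1p0 h1p)
        · rw [ENNReal.mul_rpow_of_nonneg _ _ h1p0, ← ENNReal.rpow_mul,
            ENNReal.ofReal_mul (by positivity)]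
          refine mul_le_mul' ?_ (auxR I hIlt.ne h1p0 h1p)
          have he0 : 0 ≤ (p-1)*(1/p) := mul_nonneg (by linarith) h1p0
          have he1 : (p-1)*(1/p) ≤ 1 := by
            rw [sub_mul, one_mul, mul_one_div_cancel hp0.ne']
            have : 0 ≤ 1/p := h1p0
            linarith
          have h6 := auxR (ENNReal.ofReal C₀) ENNReal.ofReal_ne_top he0 he1
          rwa [ENNReal.toReal_ofReal hC₀.le] at h6
    _ ≤ ENNReal.ofReal ((3*C₀*max M.toReal 1 + max C₀ 1 * max I.toReal 1) * p) := by
        rw [← ENNReal.ofReal_add (by positivity) (by positivity)]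
        apply ENNReal.ofReal_le_ofReal
        have hM1 : (1:ℝ) ≤ max M.toReal 1 := le_max_right _ _
        have hI1 : (1:ℝ) ≤ max I.toReal 1 := le_max_right _ _
        have hc1 : (1:ℝ) ≤ max C₀ 1 := le_max_right _ _
        nlinarith [mul_nonneg (mul_nonneg hC₀.le (le_trans zero_le_one hM1))
            (sub_nonneg.mpr hp),
          mul_nonneg (mul_nonneg (le_trans zero_le_one hc1) (le_trans zero_le_one hI1))
            (sub_nonneg.mpr hp)]
end

section
/- Let n ∈ {2,3}, T > 0, and let E : [0,T]×ℝⁿ → ℝⁿ be bounded and jointly measurable. Suppose there exists C₀ > 0 such that for every real p > n, every t ∈ [0,T] and all x, y ∈ ℝⁿ, |E(t,x) − E(t,y)| ≤ C₀ p² |x−y|^{1−n/p}. Let (x₀,v₀) ∈ ℝⁿ×ℝⁿ and let γ₁, γ₂ : [0,T] → ℝⁿ be continuous functions satisfying γᵢ(t) = x₀ + t v₀ + ∫₀^t ∫₀^s E(τ, γᵢ(τ)) dτ ds for all t ∈ [0,T] (i = 1,2). Then γ₁(t) = γ₂(t) for all t ∈ [0,T]. -/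
set_option maxHeartbeats 1000000

open MeasureTheory

private lemma sq_exp_anti17 {y z : ℝ} (hy : 2 ≤ y) (hyz : y ≤ z) :
    z ^ 2 * Real.exp (-z) ≤ y ^ 2 * Real.exp (-y) := by
  have hd : 0 ≤ z - y := by linarith
  have h1 : 1 + (z - y) / 2 ≤ Real.exp ((z - y) / 2) := by
    have := Real.add_one_le_exp ((z - y) / 2); linarith
  have hy0 : (0:ℝ) < y := by linarith
  have h2 : z ≤ y * (1 + (z - y) / 2) := by nlinarith
  have h3 : z ≤ y * Real.exp ((z - y) / 2) := by nlinarith [Real.exp_pos ((z - y) / 2)]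
  have hsq : Real.exp ((z - y) / 2) ^ 2 = Real.exp (z - y) := by
    rw [sq, ← Real.exp_add]; ring_nf
  have h4 : z ^ 2 ≤ y ^ 2 * Real.exp (z - y) := by
    have hz0 : 0 ≤ z := by linarith
    calc z ^ 2 ≤ (y * Real.exp ((z - y) / 2)) ^ 2 := by
          apply pow_le_pow_left₀ hz0 h3
      _ = y ^ 2 * Real.exp (z - y) := by rw [mul_pow, hsq]
  have h5 : Real.exp (z - y) * Real.exp (-z) = Real.exp (-y) := by
    rw [← Real.exp_add]; ring_nf
  calc z ^ 2 * Real.exp (-z) ≤ y ^ 2 * Real.exp (z - y) * Real.exp (-z) := by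
        nlinarith [Real.exp_pos (-z)]
    _ = y ^ 2 * Real.exp (-y) := by rw [mul_assoc, h5]

noncomputable def Yfun17 (μ L s : ℝ) : ℝ := L * Real.exp (-(μ * s))
noncomputable def Wfun17 (μ L s : ℝ) : ℝ := Real.exp (-(Yfun17 μ L s))
noncomputable def Gfun17 (μ L s : ℝ) : ℝ := μ * Yfun17 μ L s * Wfun17 μ L s
noncomputable def Gdfun17 (μ L s : ℝ) : ℝ :=
  μ ^ 2 * Yfun17 μ L s * (Yfun17 μ L s - 1) * Wfun17 μ L s

private lemma hasDerivAt_Yfun17 (μ L s : ℝ) :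
    HasDerivAt (Yfun17 μ L) (-(μ * Yfun17 μ L s)) s := by
  have h1 : HasDerivAt (fun x : ℝ => -(μ * x)) (-μ) s := by
    exact (((hasDerivAt_id s).const_mul μ).neg).congr_deriv (by ring)
  have h3 := (h1.exp).const_mul L
  exact h3.congr_deriv (by simp only [Yfun17]; ring)

private lemma hasDerivAt_Wfun17 (μ L s : ℝ) :
    HasDerivAt (Wfun17 μ L) (Gfun17 μ L s) s := by
  have := ((hasDerivAt_Yfun17 μ L s).neg).exp
  exact this.congr_deriv (by simp only [Gfun17, Wfun17, Pi.neg_apply]; ring)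

private lemma hasDerivAt_Gfun17 (μ L s : ℝ) :
    HasDerivAt (Gfun17 μ L) (Gdfun17 μ L s) s := by
  have := ((hasDerivAt_Yfun17 μ L s).const_mul μ).mul (hasDerivAt_Wfun17 μ L s)
  exact this.congr_deriv (by simp only [Gfun17, Gdfun17]; ring)

private lemma continuous_Yfun17 (μ L : ℝ) : Continuous (Yfun17 μ L) := by
  unfold Yfun17; fun_prop

private lemma continuous_Wfun17 (μ L : ℝ) : Continuous (Wfun17 μ L) := by
  unfold Wfun17; have := continuous_Yfun17 μ L; fun_prop

private lemma continuous_Gfun17 (μ L : ℝ) : Continuous (Gfun17 μ L) := by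
  unfold Gfun17; have := continuous_Yfun17 μ L; have := continuous_Wfun17 μ L; fun_prop

private lemma continuous_Gdfun17 (μ L : ℝ) : Continuous (Gdfun17 μ L) := by
  unfold Gdfun17; have := continuous_Yfun17 μ L; have := continuous_Wfun17 μ L; fun_prop


/-- Uniqueness for the second-order ODE `ẍ = E(t,x)`: if `E` is bounded,
measurable, and satisfies the `p`-dependent Hölder estimate
`|E(t,x) - E(t,y)| ≤ C₀ p² |x-y|^{1-n/p}` for every `p > n`, then two continuous curves solving
`γ(t) = x₀ + t v₀ + ∫₀ᵗ ∫₀ˢ E(τ, γ(τ)) dτ ds` on `[0,T]` coincide. -/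
theorem stmt17 (n : ℕ) (hn : n = 2 ∨ n = 3) (T : ℝ) (hT : 0 < T)
    (E : ℝ → EuclideanSpace ℝ (Fin n) → EuclideanSpace ℝ (Fin n))
    (hEbdd : ∃ K : ℝ, ∀ t x, ‖E t x‖ ≤ K)
    (hEmeas : Measurable (Function.uncurry E))
    (C₀ : ℝ) (hC₀ : 0 < C₀)
    (hEhold : ∀ p : ℝ, (n : ℝ) < p → ∀ t ∈ Set.Icc 0 T,
      ∀ x y : EuclideanSpace ℝ (Fin n),
        ‖E t x - E t y‖ ≤ C₀ * p ^ 2 * ‖x - y‖ ^ (1 - (n : ℝ) / p))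
    (x₀ v₀ : EuclideanSpace ℝ (Fin n))
    (γ₁ γ₂ : ℝ → EuclideanSpace ℝ (Fin n))
    (hγ₁cont : ContinuousOn γ₁ (Set.Icc 0 T)) (hγ₂cont : ContinuousOn γ₂ (Set.Icc 0 T))
    (hγ₁ : ∀ t ∈ Set.Icc 0 T,
      γ₁ t = x₀ + t • v₀ + ∫ s in (0:ℝ)..t, ∫ τ in (0:ℝ)..s, E τ (γ₁ τ))
    (hγ₂ : ∀ t ∈ Set.Icc 0 T,
      γ₂ t = x₀ + t • v₀ + ∫ s in (0:ℝ)..t, ∫ τ in (0:ℝ)..s, E τ (γ₂ τ)) :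
    ∀ t ∈ Set.Icc 0 T, γ₁ t = γ₂ t := by
  obtain ⟨K, hK⟩ := hEbdd
  have hK0 : 0 ≤ K := le_trans (norm_nonneg _) (hK 0 x₀)
  have hn0 : 0 < n := by rcases hn with h | h <;> omega
  have hnR : (0:ℝ) < (n:ℝ) := by exact_mod_cast hn0
  set C₁ : ℝ := Real.exp 1 * C₀ * (n:ℝ) ^ 2 with hC₁def
  have hC₁pos : 0 < C₁ := mul_pos (mul_pos (Real.exp_pos 1) hC₀) (pow_pos hnR 2)
  set μ : ℝ := Real.sqrt (2 * C₁) with hμdef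
  have hμpos : 0 < μ := Real.sqrt_pos.mpr (by linarith)
  have hμsq : μ ^ 2 = 2 * C₁ := Real.sq_sqrt (by linarith)
  -- integrability of composed fields
  have hmint : ∀ γ : ℝ → EuclideanSpace ℝ (Fin n), ContinuousOn γ (Set.Icc 0 T) →
      IntegrableOn (fun τ => E τ (γ τ)) (Set.Icc 0 T) volume := by
    intro γ hγc
    have hγm : AEMeasurable γ (volume.restrict (Set.Icc 0 T)) :=
      hγc.aemeasurable measurableSet_Icc
    have hm : AEMeasurable (fun τ => E τ (γ τ)) (volume.restrict (Set.Icc 0 T)) :=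
      hEmeas.comp_aemeasurable (aemeasurable_id.prodMk hγm)
    refine Integrable.mono' (g := fun _ => K) ?_ hm.aestronglyMeasurable
      (Filter.Eventually.of_forall fun τ => hK τ _)
    exact integrableOn_const measure_Icc_lt_top.ne
  have hIf₁ := hmint γ₁ hγ₁cont
  have hIf₂ := hmint γ₂ hγ₂cont
  have hIΔ : IntegrableOn (fun τ => E τ (γ₁ τ) - E τ (γ₂ τ)) (Set.Icc 0 T) volume :=
    hIf₁.sub hIf₂
  have hiv : ∀ {g : ℝ → EuclideanSpace ℝ (Fin n)}, IntegrableOn g (Set.Icc 0 T) volume →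
      ∀ c ∈ Set.Icc (0:ℝ) T, ∀ d ∈ Set.Icc (0:ℝ) T, IntervalIntegrable g volume c d := by
    intro g hg c hc d hd
    exact (hg.mono_set (Set.uIcc_subset_Icc hc hd)).intervalIntegrable
  have h0T : (0:ℝ) ∈ Set.Icc (0:ℝ) T := ⟨le_rfl, hT.le⟩
  -- continuity of primitives
  have hprimc : ∀ g : ℝ → EuclideanSpace ℝ (Fin n), IntegrableOn g (Set.Icc 0 T) volume →
      ContinuousOn (fun x => ∫ τ in (0:ℝ)..x, g τ) (Set.Icc 0 T) := by
    intro g hg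
    have := intervalIntegral.continuousOn_primitive_interval
      (a := (0:ℝ)) (b := T) (μ := volume) (f := g) (by rwa [Set.uIcc_of_le hT.le])
    rwa [Set.uIcc_of_le hT.le] at this
  have hPcont : ContinuousOn (fun x => ∫ τ in (0:ℝ)..x, (E τ (γ₁ τ) - E τ (γ₂ τ)))
      (Set.Icc 0 T) := hprimc _ hIΔ
  -- γ₁ 0 = γ₂ 0
  have hγeq0 : γ₁ 0 = γ₂ 0 := by
    have h1 := hγ₁ 0 h0T
    have h2 := hγ₂ 0 h0T
    simp only [intervalIntegral.integral_same, zero_smul, add_zero] at h1 h2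
    rw [h1, h2]
  -- the difference identity
  have hη : ∀ t ∈ Set.Icc (0:ℝ) T,
      γ₁ t - γ₂ t = ∫ s in (0:ℝ)..t, ∫ τ in (0:ℝ)..s, (E τ (γ₁ τ) - E τ (γ₂ τ)) := by
    intro t ht
    have hQ1c := hprimc _ hIf₁
    have hQ2c := hprimc _ hIf₂
    have hsub : Set.uIcc (0:ℝ) t ⊆ Set.Icc 0 T := Set.uIcc_subset_Icc h0T ht
    have hi1 : IntervalIntegrable (fun s => ∫ τ in (0:ℝ)..s, E τ (γ₁ τ)) volume 0 t :=
      (hQ1c.mono hsub).intervalIntegrable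
    have hi2 : IntervalIntegrable (fun s => ∫ τ in (0:ℝ)..s, E τ (γ₂ τ)) volume 0 t :=
      (hQ2c.mono hsub).intervalIntegrable
    have e : γ₁ t - γ₂ t = (∫ s in (0:ℝ)..t, ∫ τ in (0:ℝ)..s, E τ (γ₁ τ))
        - ∫ s in (0:ℝ)..t, ∫ τ in (0:ℝ)..s, E τ (γ₂ τ) := by
      rw [hγ₁ t ht, hγ₂ t ht]; abel
    rw [e, ← intervalIntegral.integral_sub hi1 hi2]
    apply intervalIntegral.integral_congr
    intro s hs
    exact (intervalIntegral.integral_sub (hiv hIf₁ 0 h0T s (hsub hs))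
      (hiv hIf₂ 0 h0T s (hsub hs))).symm
  -- main comparison estimate
  have main : ∀ L : ℝ, 2 * Real.exp (μ * T) ≤ L → ∀ t ∈ Set.Icc (0:ℝ) T,
      ‖γ₁ t - γ₂ t‖ ≤ Real.exp (-(L * Real.exp (-(μ * T)))) := by
    intro L hL
    have hLpos : 0 < L := lt_of_lt_of_le (by positivity) hL
    have hYpos : ∀ s, 0 < Yfun17 μ L s := fun s => mul_pos hLpos (Real.exp_pos _)
    have hWpos : ∀ s, 0 < Wfun17 μ L s := fun s => Real.exp_pos _
    have hY2 : ∀ s ∈ Set.Icc (0:ℝ) T, 2 ≤ Yfun17 μ L s := by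
      intro s hs
      have h1 : Real.exp (-(μ * T)) ≤ Real.exp (-(μ * s)) := by
        apply Real.exp_le_exp.mpr
        nlinarith [hs.2, hμpos.le]
      calc (2:ℝ) = 2 * Real.exp (μ * T) * Real.exp (-(μ * T)) := by
            rw [mul_assoc, ← Real.exp_add]; simp
        _ ≤ L * Real.exp (-(μ * s)) :=
            mul_le_mul hL h1 (Real.exp_pos _).le hLpos.le
        _ = Yfun17 μ L s := rfl
    -- pointwise field estimate
    have hptw : ∀ s ∈ Set.Icc (0:ℝ) T, ‖γ₁ s - γ₂ s‖ ≤ Wfun17 μ L s →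
        ‖E s (γ₁ s) - E s (γ₂ s)‖ ≤ Gdfun17 μ L s := by
      intro s hs hus
      have hy2 := hY2 s hs
      have hWs := hWpos s
      have hYs := hYpos s
      rcases eq_or_lt_of_le (norm_nonneg (γ₁ s - γ₂ s)) with h0 | h0
      · have heq : γ₁ s = γ₂ s := by
          rw [← sub_eq_zero]; exact norm_eq_zero.mp h0.symm
        rw [heq, sub_self, norm_zero]
        unfold Gdfun17
        apply mul_nonneg (mul_nonneg (mul_nonneg (sq_nonneg μ) hYs.le) (by linarith)) hWs.le
      · set u : ℝ := ‖γ₁ s - γ₂ s‖ with hu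
        set q : ℝ := -Real.log u with hq
        have hqY : Yfun17 μ L s ≤ q := by
          have h := Real.log_le_log h0 hus
          rw [Wfun17, Real.log_exp] at h
          simp only [hq]; linarith
        have hq2 : 2 ≤ q := le_trans hy2 hqY
        have hp : (n:ℝ) < (n:ℝ) * q := by nlinarith
        have hh := hEhold ((n:ℝ) * q) hp s hs (γ₁ s) (γ₂ s)
        have hq0 : q ≠ 0 := by linarith
        have hnq : (n:ℝ) / ((n:ℝ) * q) = 1 / q := by
          field_simp
        have hlu : Real.log u = -q := by simp [hq]
        have hexp : u ^ (1 - (n:ℝ) / ((n:ℝ) * q)) = Real.exp 1 * Real.exp (-q) := by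
          rw [hnq, Real.rpow_def_of_pos h0, hlu, ← Real.exp_add]
          congr 1
          field_simp
          ring
        calc ‖E s (γ₁ s) - E s (γ₂ s)‖
            ≤ C₀ * ((n:ℝ) * q) ^ 2 * u ^ (1 - (n:ℝ) / ((n:ℝ) * q)) := hh
          _ = C₁ * (q ^ 2 * Real.exp (-q)) := by
              rw [hexp, hC₁def]; ring
          _ ≤ C₁ * (Yfun17 μ L s ^ 2 * Real.exp (-(Yfun17 μ L s))) := by
              apply mul_le_mul_of_nonneg_left (sq_exp_anti17 hy2 hqY) hC₁pos.le
          _ ≤ Gdfun17 μ L s := by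
              unfold Gdfun17 Wfun17
              rw [hμsq]
              have hpr : 0 ≤ C₁ * Real.exp (-(Yfun17 μ L s)) * Yfun17 μ L s
                  * (Yfun17 μ L s - 2) :=
                mul_nonneg (mul_nonneg (mul_nonneg hC₁pos.le
                  (Real.exp_pos _).le) (by linarith)) (by linarith)
              nlinarith [hpr]
    -- the crossing argument
    set B : Set ℝ := {s ∈ Set.Icc (0:ℝ) T |
      Wfun17 μ L s ≤ ‖γ₁ s - γ₂ s‖ ∨
      Gfun17 μ L s ≤ ‖∫ τ in (0:ℝ)..s, (E τ (γ₁ τ) - E τ (γ₂ τ))‖} with hBdef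
    have hBempty : B = ∅ := by
      by_contra hne
      have hBne : B.Nonempty := Set.nonempty_iff_ne_empty.mpr hne
      have hvcont : ContinuousOn (fun s => ‖∫ τ in (0:ℝ)..s, (E τ (γ₁ τ) - E τ (γ₂ τ))‖)
          (Set.Icc 0 T) := hPcont.norm
      have hBclosed : IsClosed B := by
        have hcont : ContinuousOn (fun s => (Wfun17 μ L s - ‖γ₁ s - γ₂ s‖,
            Gfun17 μ L s - ‖∫ τ in (0:ℝ)..s, (E τ (γ₁ τ) - E τ (γ₂ τ))‖)) (Set.Icc 0 T) := by
          apply ContinuousOn.prodMk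
          · exact ((continuous_Wfun17 μ L).continuousOn).sub (hγ₁cont.sub hγ₂cont).norm
          · exact ((continuous_Gfun17 μ L).continuousOn).sub hvcont
        have hset : IsClosed {p : ℝ × ℝ | p.1 ≤ 0 ∨ p.2 ≤ 0} :=
          (isClosed_le continuous_fst continuous_const).union
            (isClosed_le continuous_snd continuous_const)
        have := hcont.preimage_isClosed_of_isClosed isClosed_Icc hset
        convert this using 1
        ext s
        simp only [hBdef, Set.mem_setOf_eq, Set.mem_inter_iff, Set.mem_preimage,
          Set.mem_sep_iff, sub_nonpos]
      have hBbdd : BddBelow B := ⟨0, fun x hx => hx.1.1⟩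
      set c : ℝ := sInf B with hcdef
      have hcB : c ∈ B := hBclosed.csInf_mem hBne hBbdd
      have hcIcc : c ∈ Set.Icc (0:ℝ) T := hcB.1
      have hgood : ∀ s, 0 ≤ s → s < c →
          ‖γ₁ s - γ₂ s‖ < Wfun17 μ L s ∧
          ‖∫ τ in (0:ℝ)..s, (E τ (γ₁ τ) - E τ (γ₂ τ))‖ < Gfun17 μ L s := by
        intro s h0 hsc
        by_contra hbad
        rw [not_and_or, not_lt, not_lt] at hbad
        have hsB : s ∈ B := ⟨⟨h0, le_trans hsc.le hcIcc.2⟩, hbad⟩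
        exact absurd (csInf_le hBbdd hsB) (not_le.mpr hsc)
      have hc0 : 0 < c := by
        rcases eq_or_lt_of_le hcIcc.1 with h | h
        · exfalso
          have h2 := hcB.2
          rw [← h] at h2
          rcases h2 with h2 | h2
          · rw [hγeq0, sub_self, norm_zero] at h2
            exact absurd h2 (not_le.mpr (hWpos 0))
          · rw [intervalIntegral.integral_same, norm_zero] at h2
            have : 0 < Gfun17 μ L 0 :=
              mul_pos (mul_pos hμpos (hYpos 0)) (hWpos 0)
            exact absurd h2 (not_le.mpr this)
        · exact h
      have hcT : c ≤ T := hcIcc.2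
      -- a.e. bounds on [0,c]
      have haemem : ∀ᵐ s ∂(volume.restrict (Set.Icc (0:ℝ) c)), s ∈ Set.Icc (0:ℝ) c :=
        ae_restrict_mem measurableSet_Icc
      have haene : ∀ᵐ s ∂(volume.restrict (Set.Icc (0:ℝ) c)), s ≠ c := by
        apply ae_restrict_of_ae
        rw [ae_iff]
        simpa using measure_singleton (α := ℝ) (μ := volume) c
      have hvleG : ∀ᵐ s ∂(volume.restrict (Set.Icc (0:ℝ) c)),
          ‖∫ τ in (0:ℝ)..s, (E τ (γ₁ τ) - E τ (γ₂ τ))‖ ≤ Gfun17 μ L s := by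
        filter_upwards [haemem, haene] with s hs hne
        exact (hgood s hs.1 (lt_of_le_of_ne hs.2 hne)).2.le
      have hΔleGd : ∀ᵐ s ∂(volume.restrict (Set.Icc (0:ℝ) c)),
          ‖E s (γ₁ s) - E s (γ₂ s)‖ ≤ Gdfun17 μ L s := by
        filter_upwards [haemem, haene] with s hs hne
        exact hptw s ⟨hs.1, le_trans hs.2 hcT⟩
          (hgood s hs.1 (lt_of_le_of_ne hs.2 hne)).1.le
      -- integrability
      have hsubc : Set.uIcc (0:ℝ) c ⊆ Set.Icc 0 T := Set.uIcc_subset_Icc h0T hcIcc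
      have hviv : IntervalIntegrable
          (fun s => ‖∫ τ in (0:ℝ)..s, (E τ (γ₁ τ) - E τ (γ₂ τ))‖) volume 0 c :=
        ((hPcont.norm).mono hsubc).intervalIntegrable
      have hGiv : IntervalIntegrable (Gfun17 μ L) volume 0 c :=
        (continuous_Gfun17 μ L).intervalIntegrable 0 c
      have hGdiv : IntervalIntegrable (Gdfun17 μ L) volume 0 c :=
        (continuous_Gdfun17 μ L).intervalIntegrable 0 c
      have hΔiv : IntervalIntegrable (fun τ => E τ (γ₁ τ) - E τ (γ₂ τ)) volume 0 c :=
        hiv hIΔ 0 h0T c hcIcc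
      have hΔniv : IntervalIntegrable (fun τ => ‖E τ (γ₁ τ) - E τ (γ₂ τ)‖) volume 0 c :=
        hΔiv.norm
      -- FTC
      have hftc1 : (∫ s in (0:ℝ)..c, Gfun17 μ L s) = Wfun17 μ L c - Wfun17 μ L 0 :=
        intervalIntegral.integral_eq_sub_of_hasDerivAt
          (fun s _ => hasDerivAt_Wfun17 μ L s) hGiv
      have hftc2 : (∫ s in (0:ℝ)..c, Gdfun17 μ L s) = Gfun17 μ L c - Gfun17 μ L 0 :=
        intervalIntegral.integral_eq_sub_of_hasDerivAt
          (fun s _ => hasDerivAt_Gfun17 μ L s) hGdiv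
      have h1 : ‖γ₁ c - γ₂ c‖ < Wfun17 μ L c := by
        rw [hη c hcIcc]
        calc ‖∫ s in (0:ℝ)..c, ∫ τ in (0:ℝ)..s, (E τ (γ₁ τ) - E τ (γ₂ τ))‖
            ≤ ∫ s in (0:ℝ)..c, ‖∫ τ in (0:ℝ)..s, (E τ (γ₁ τ) - E τ (γ₂ τ))‖ :=
              intervalIntegral.norm_integral_le_integral_norm hc0.le
          _ ≤ ∫ s in (0:ℝ)..c, Gfun17 μ L s :=
              intervalIntegral.integral_mono_ae_restrict hc0.le hviv hGiv hvleG
          _ = Wfun17 μ L c - Wfun17 μ L 0 := hftc1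
          _ < Wfun17 μ L c := by linarith [hWpos 0]
      have h2 : ‖∫ τ in (0:ℝ)..c, (E τ (γ₁ τ) - E τ (γ₂ τ))‖ < Gfun17 μ L c := by
        calc ‖∫ τ in (0:ℝ)..c, (E τ (γ₁ τ) - E τ (γ₂ τ))‖
            ≤ ∫ τ in (0:ℝ)..c, ‖E τ (γ₁ τ) - E τ (γ₂ τ)‖ :=
              intervalIntegral.norm_integral_le_integral_norm hc0.le
          _ ≤ ∫ τ in (0:ℝ)..c, Gdfun17 μ L τ :=
              intervalIntegral.integral_mono_ae_restrict hc0.le hΔniv hGdiv hΔleGd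
          _ = Gfun17 μ L c - Gfun17 μ L 0 := hftc2
          _ < Gfun17 μ L c := by
              have : 0 < Gfun17 μ L 0 := mul_pos (mul_pos hμpos (hYpos 0)) (hWpos 0)
              linarith
      rcases hcB.2 with h | h
      · exact absurd h (not_le.mpr h1)
      · exact absurd h (not_le.mpr h2)
    -- conclude the estimate
    intro t ht
    have htB : t ∉ B := by rw [hBempty]; exact Set.notMem_empty t
    have hnot : ¬(Wfun17 μ L t ≤ ‖γ₁ t - γ₂ t‖ ∨
        Gfun17 μ L t ≤ ‖∫ τ in (0:ℝ)..t, (E τ (γ₁ τ) - E τ (γ₂ τ))‖) :=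
      fun h => htB ⟨ht, h⟩
    push_neg at hnot
    have hlt : ‖γ₁ t - γ₂ t‖ < Wfun17 μ L t := hnot.1
    have hWle : Wfun17 μ L t ≤ Real.exp (-(L * Real.exp (-(μ * T)))) := by
      unfold Wfun17
      apply Real.exp_le_exp.mpr
      have h1 : Real.exp (-(μ * T)) ≤ Real.exp (-(μ * t)) := by
        apply Real.exp_le_exp.mpr
        nlinarith [ht.2, hμpos.le]
      have : L * Real.exp (-(μ * T)) ≤ L * Real.exp (-(μ * t)) :=
        mul_le_mul_of_nonneg_left h1 hLpos.le
      simp only [Yfun17]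
      linarith
    exact le_trans hlt.le hWle
  -- take L → ∞
  intro t ht
  have hle0 : ‖γ₁ t - γ₂ t‖ ≤ 0 := by
    have htend : Filter.Tendsto (fun L : ℝ => Real.exp (-(L * Real.exp (-(μ * T)))))
        Filter.atTop (nhds 0) := by
      apply Real.tendsto_exp_atBot.comp
      have h1 : Filter.Tendsto (fun L : ℝ => L * Real.exp (-(μ * T)))
          Filter.atTop Filter.atTop :=
        Filter.Tendsto.atTop_mul_const (Real.exp_pos _) Filter.tendsto_id
      exact Filter.tendsto_neg_atTop_atBot.comp h1
    refine ge_of_tendsto htend ?_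
    filter_upwards [Filter.eventually_ge_atTop (2 * Real.exp (μ * T))] with L hL
    exact main L hL t ht
  rw [← sub_eq_zero]
  exact norm_eq_zero.mp (le_antisymm hle0 (norm_nonneg _))
end
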